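/- arXiv:1104.3696 — 8 statements merged into one kernel-verified Lean document; each statement's English description precedes it below -/
import Mathlib

section
/- Let N ≥ 1 and let b : ℝ × (EuclideanSpace ℝ (Fin N)) → EuclideanSpace ℝ (Fin N) be continuous and Lipschitz in the space variable with a Lipschitz constant uniform in time. Suppose Φ : ℝ → ℝ → EuclideanSpace ℝ (Fin N) → EuclideanSpace ℝ (Fin N) is such that for every (t₀, x₀) the curve t ↦ Φ(t, t₀, x₀) is differentiable with derivative b(t, Φ(t, t₀, x₀)) and Φ(t₀, t₀, x₀) = x₀. Fix t ∈ ℝ and suppose that the map (s, y) ↦ Φ(t, s, y) is (Fréchet) differentiable at (t₀, x). Then ∂Φ/∂t₂(t, t₀, x) + D₃Φ(t, t₀, x)(b(t₀, x)) = 0, where ∂Φ/∂t₂ denotes the partial derivative in the second argument and D₃Φ(t, t₀, x) the Fréchet derivative (Jacobian) in the third argument. -/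
open Filter Set

/-- Global uniqueness of ODE solutions on ℝ for a globally Lipschitz vector field. -/
lemma ode_unique_global {E : Type*} [NormedAddCommGroup E] [NormedSpace ℝ E]
    {v : ℝ → E → E} {K : NNReal} (hv : ∀ t, LipschitzWith K (v t))
    {f g : ℝ → E} (hf : ∀ t, HasDerivAt f (v t (f t)) t)
    (hg : ∀ t, HasDerivAt g (v t (g t)) t)
    {s : ℝ} (heq : f s = g s) (u : ℝ) : f u = g u := by
  have h := ODE_solution_unique_of_mem_Ioo (s := fun _ => (univ : Set E))
    (fun t _ => (hv t).lipschitzOnWith)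
    (t₀ := s) (a := min s u - 1) (b := max s u + 1)
    ⟨by linarith [min_le_left s u], by linarith [le_max_left s u]⟩
    (fun t _ => ⟨hf t, trivial⟩) (fun t _ => ⟨hg t, trivial⟩) heq
  exact h ⟨by linarith [min_le_right s u], by linarith [le_max_right s u]⟩

/-- Differentiating the identity `Φ(t, t₀, Φ(t₀, t, x₀)) = x₀` in `t₀`:
if `(s, y) ↦ Φ(t, s, y)` is Fréchet differentiable at `(t₀, x)` with derivative `D`, then
`∂Φ/∂t₂(t, t₀, x) + D₃Φ(t, t₀, x)(b(t₀, x)) = 0`. -/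
theorem flow_derivative_identity
    (N : ℕ) (hN : 1 ≤ N)
    (b : ℝ × EuclideanSpace ℝ (Fin N) → EuclideanSpace ℝ (Fin N))
    (hb_cont : Continuous b)
    (K : NNReal)
    (hb_lip : ∀ t : ℝ, LipschitzWith K (fun x => b (t, x)))
    (Φ : ℝ → ℝ → EuclideanSpace ℝ (Fin N) → EuclideanSpace ℝ (Fin N))
    (hΦ_deriv : ∀ (t₀ : ℝ) (x₀ : EuclideanSpace ℝ (Fin N)) (t : ℝ),
      HasDerivAt (fun s => Φ s t₀ x₀) (b (t, Φ t t₀ x₀)) t)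
    (hΦ_init : ∀ (t₀ : ℝ) (x₀ : EuclideanSpace ℝ (Fin N)), Φ t₀ t₀ x₀ = x₀)
    (t t₀ : ℝ) (x : EuclideanSpace ℝ (Fin N))
    (D : ℝ × EuclideanSpace ℝ (Fin N) →L[ℝ] EuclideanSpace ℝ (Fin N))
    (hD : HasFDerivAt (fun p : ℝ × EuclideanSpace ℝ (Fin N) => Φ t p.1 p.2) D (t₀, x)) :
    D (1, 0) + D (0, b (t₀, x)) = 0 := by
  -- The map s ↦ Φ t s (Φ s t₀ x) is constant, equal to Φ t t₀ x.
  have hconst : ∀ s : ℝ, Φ t s (Φ s t₀ x) = Φ t t₀ x := by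
    intro s
    exact ode_unique_global (v := fun u y => b (u, y)) hb_lip
      (f := fun u => Φ u s (Φ s t₀ x)) (g := fun u => Φ u t₀ x)
      (fun u => hΦ_deriv s (Φ s t₀ x) u) (fun u => hΦ_deriv t₀ x u)
      (s := s) (by simp [hΦ_init]) t
  -- The curve s ↦ (s, Φ s t₀ x) has derivative (1, b (t₀, x)) at t₀.
  have hc : HasDerivAt (fun s : ℝ => ((s, Φ s t₀ x) : ℝ × EuclideanSpace ℝ (Fin N)))
      (1, b (t₀, x)) t₀ := by
    have h1 : HasDerivAt (fun s : ℝ => s) 1 t₀ := hasDerivAt_id t₀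
    have h2 := hΦ_deriv t₀ x t₀
    rw [hΦ_init t₀ x] at h2
    exact h1.prodMk h2
  have hc0 : ((t₀ : ℝ), Φ t₀ t₀ x) = (t₀, x) := by rw [hΦ_init]
  -- Chain rule.
  have hD' : HasFDerivAt (fun p : ℝ × EuclideanSpace ℝ (Fin N) => Φ t p.1 p.2) D
      (t₀, Φ t₀ t₀ x) := by rw [hΦ_init]; exact hD
  have hcomp : HasDerivAt (fun s : ℝ => Φ t s (Φ s t₀ x)) (D (1, b (t₀, x))) t₀ :=
    by have := hD'.comp_hasDerivAt t₀ hc; exact this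
  -- But the function is constant, so its derivative is 0.
  have hzero : HasDerivAt (fun s : ℝ => Φ t s (Φ s t₀ x)) 0 t₀ := by
    have : (fun s : ℝ => Φ t s (Φ s t₀ x)) = fun _ => Φ t t₀ x := funext hconst
    rw [this]; exact hasDerivAt_const t₀ _
  have hD0 : D (1, b (t₀, x)) = 0 := hcomp.unique hzero
  have h2 : ((1 : ℝ), (0 : EuclideanSpace ℝ (Fin N))) + (0, b (t₀, x)) = (1, b (t₀, x)) := by
    simp [Prod.ext_iff]
  rw [← D.map_add, h2, hD0]
end

section
/- Let g : ℝ → ℝ be twice continuously differentiable with g'(y) ≤ μ and |g''(y)| ≤ K for all y ∈ ℝ, where μ > 0 and K > 0 are constants. Let ξ ∈ ℝ, let Y : [0, ∞) → ℝ be differentiable with Y'(τ) = g(Y(τ)) and Y(0) = ξ, let Z : [0, ∞) → ℝ be differentiable with Z'(τ) = g'(Y(τ)) Z(τ) and Z(0) = 1, and let W : [0, ∞) → ℝ be differentiable with W'(τ) = g'(Y(τ)) W(τ) + g''(Y(τ)) Z(τ)² and W(0) = 0. Then |W(τ)| ≤ (K/μ)(e^{μτ} - 1) Z(τ) for all τ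 ≥ 0. -/
open Filter Set

/-- Bound on the second variation `W` of the scalar autonomous ODE
`Y' = g(Y)`: `|W(τ)| ≤ (K/μ)(e^{μτ} - 1) Z(τ)` when `g' ≤ μ` and `|g''| ≤ K`. -/
theorem second_variation_bound
    (μ K : ℝ) (hμ : 0 < μ) (hK : 0 < K)
    (g : ℝ → ℝ) (hg : ContDiff ℝ 2 g)
    (hg' : ∀ y : ℝ, deriv g y ≤ μ)
    (hg'' : ∀ y : ℝ, |deriv (deriv g) y| ≤ K)
    (ξ : ℝ)
    (Y : ℝ → ℝ)
    (hY : ∀ τ : ℝ, 0 ≤ τ → HasDerivAt Y (g (Y τ)) τ) (hY0 : Y 0 = ξ)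
    (Z : ℝ → ℝ)
    (hZ : ∀ τ : ℝ, 0 ≤ τ → HasDerivAt Z (deriv g (Y τ) * Z τ) τ) (hZ0 : Z 0 = 1)
    (W : ℝ → ℝ)
    (hW : ∀ τ : ℝ, 0 ≤ τ →
      HasDerivAt W (deriv g (Y τ) * W τ + deriv (deriv g) (Y τ) * (Z τ)^2) τ)
    (hW0 : W 0 = 0) :
    ∀ τ : ℝ, 0 ≤ τ → |W τ| ≤ (K / μ) * (Real.exp (μ * τ) - 1) * Z τ := by
  have hYc : ContinuousOn Y (Ici 0) := fun τ hτ => ((hY τ hτ).continuousAt).continuousWithinAt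
  have hZc : ContinuousOn Z (Ici 0) := fun τ hτ => ((hZ τ hτ).continuousAt).continuousWithinAt
  have hWc : ContinuousOn W (Ici 0) := fun τ hτ => ((hW τ hτ).continuousAt).continuousWithinAt
  have hgc1 : Continuous (deriv g) := hg.continuous_deriv (by norm_num)
  -- Step 1: Z is positive on [0, ∞)
  have hZpos : ∀ τ : ℝ, 0 ≤ τ → 0 < Z τ := by
    intro T hT
    by_contra h
    push_neg at h
    have hZcT : ContinuousOn Z (Icc 0 T) := hZc.mono Icc_subset_Ici_self
    have hmem : (0:ℝ) ∈ Icc (Z T) (Z 0) := ⟨h, by rw [hZ0]; norm_num⟩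
    obtain ⟨t₀, ht₀mem, ht₀⟩ := intermediate_value_Icc' hT hZcT hmem
    obtain ⟨ht₀0, ht₀T⟩ := ht₀mem
    have hYcc : ContinuousOn (fun s => deriv g (Y s)) (Icc 0 t₀) :=
      hgc1.comp_continuousOn (hYc.mono Icc_subset_Ici_self)
    obtain ⟨M, hM⟩ := isCompact_Icc.exists_bound_of_continuousOn hYcc
    have key : ∀ x ∈ Icc (0:ℝ) t₀, ‖Z (t₀ - x)‖ ≤ gronwallBound 0 M 0 (x - 0) := by
      apply norm_le_gronwallBound_of_norm_deriv_right_le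
        (f := fun x => Z (t₀ - x))
        (f' := fun x => deriv g (Y (t₀ - x)) * Z (t₀ - x) * (-1))
      · exact (hZc.mono Icc_subset_Ici_self).comp
          (Continuous.continuousOn (by continuity))
          (fun x hx => ⟨by linarith [hx.2], by linarith [hx.1]⟩)
      · intro x hx
        have h1 : (0:ℝ) ≤ t₀ - x := by linarith [hx.2]
        have hsub : HasDerivAt (fun x : ℝ => t₀ - x) (-1) x := by
          simpa using (hasDerivAt_id x).const_sub t₀
        exact (((hZ (t₀ - x) h1).comp x hsub)).hasDerivWithinAt
      · simp [ht₀]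
      · intro x hx
        have h1 : (0:ℝ) ≤ t₀ - x := by linarith [hx.2]
        have hmem2 : t₀ - x ∈ Icc (0:ℝ) t₀ := ⟨h1, by linarith [hx.1]⟩
        have := hM (t₀ - x) hmem2
        calc ‖deriv g (Y (t₀ - x)) * Z (t₀ - x) * (-1)‖
            = ‖deriv g (Y (t₀ - x))‖ * ‖Z (t₀ - x)‖ := by
              rw [mul_neg_one, norm_neg, norm_mul]
          _ ≤ M * ‖Z (t₀ - x)‖ + 0 := by
              have : (0:ℝ) ≤ ‖Z (t₀ - x)‖ := norm_nonneg _
              nlinarith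
    have := key t₀ ⟨ht₀0, le_refl _⟩
    rw [gronwallBound_ε0] at this
    simp only [sub_self, hZ0] at this
    norm_num at this
  -- Step 2: Z τ ≤ exp (μ τ)
  have hZexp : ∀ τ : ℝ, 0 ≤ τ → Z τ ≤ Real.exp (μ * τ) := by
    have hanti : AntitoneOn (fun τ => Z τ * Real.exp (-μ * τ)) (Ici 0) := by
      apply antitoneOn_of_deriv_nonpos (convex_Ici 0)
      · exact hZc.mul (Continuous.continuousOn (by continuity))
      · intro x hx
        rw [interior_Ici] at hx
        have hd : HasDerivAt (fun τ => Z τ * Real.exp (-μ * τ))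
            (deriv g (Y x) * Z x * Real.exp (-μ * x) + Z x * (Real.exp (-μ * x) * (-μ))) x := by
          have he : HasDerivAt (fun τ : ℝ => Real.exp (-μ * τ)) (Real.exp (-μ * x) * (-μ)) x := by
            simpa using ((hasDerivAt_id x).const_mul (-μ)).exp
          exact (hZ x (le_of_lt hx)).mul he
        exact (hd.differentiableAt).differentiableWithinAt
      · intro x hx
        rw [interior_Ici] at hx
        have he : HasDerivAt (fun τ : ℝ => Real.exp (-μ * τ)) (Real.exp (-μ * x) * (-μ)) x := by
          simpa using ((hasDerivAt_id x).const_mul (-μ)).exp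
        have hd : HasDerivAt (fun τ => Z τ * Real.exp (-μ * τ)) _ x := (hZ x (le_of_lt hx)).mul he
        rw [hd.deriv]
        have h1 := hg' (Y x)
        have h2 := hZpos x (le_of_lt hx)
        have h3 : (0:ℝ) < Real.exp (-μ * x) := Real.exp_pos _
        have heq : deriv g (Y x) * Z x * Real.exp (-μ * x) + Z x * (Real.exp (-μ * x) * (-μ))
            = (deriv g (Y x) - μ) * (Z x * Real.exp (-μ * x)) := by ring
        rw [heq]
        exact mul_nonpos_of_nonpos_of_nonneg (by linarith) (by positivity)
    intro τ hτ
    have := hanti (self_mem_Ici) hτ hτ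
    simp only [mul_zero, Real.exp_zero, mul_one, hZ0, one_mul] at this
    rw [show -μ * τ = -(μ * τ) by ring, Real.exp_neg, ← div_eq_mul_inv,
      div_le_one (Real.exp_pos _)] at this
    exact this
  -- Step 3: R = W / Z and the comparison functions
  set R : ℝ → ℝ := fun τ => W τ / Z τ with hR
  set φ : ℝ → ℝ := fun τ => (K / μ) * (Real.exp (μ * τ) - 1) with hφ
  have hφd : ∀ x : ℝ, HasDerivAt φ (K * Real.exp (μ * x)) x := by
    intro x
    have he : HasDerivAt (fun τ : ℝ => Real.exp (μ * τ)) (Real.exp (μ * x) * μ) x := by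
      simpa using ((hasDerivAt_id x).const_mul μ).exp
    have := ((he.sub_const 1).const_mul (K / μ))
    refine this.congr_deriv ?_
    rw [mul_comm (Real.exp (μ * x)) μ, ← mul_assoc, div_mul_cancel₀ _ hμ.ne']
  have hRd : ∀ x : ℝ, 0 < x → HasDerivAt R (deriv (deriv g) (Y x) * Z x) x := by
    intro x hx
    have hZx := hZpos x hx.le
    have hd := (hW x hx.le).div (hZ x hx.le) (ne_of_gt hZx)
    refine hd.congr_deriv ?_
    rw [div_eq_iff (by positivity)]
    ring
  have hRc : ContinuousOn R (Ici 0) :=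
    hWc.div hZc (fun x hx => ne_of_gt (hZpos x hx))
  have hφc : ContinuousOn φ (Ici 0) := Continuous.continuousOn (by continuity)
  have hR0 : R 0 = 0 := by simp [hR, hW0]
  have hφ0 : φ 0 = 0 := by simp [hφ]
  -- Monotonicity of φ ∓ R
  have mono : ∀ (ε : ℝ), ε = 1 ∨ ε = -1 →
      MonotoneOn (fun τ => φ τ + ε * R τ) (Ici 0) := by
    intro ε hε
    apply monotoneOn_of_deriv_nonneg (convex_Ici 0)
    · exact hφc.add (continuousOn_const.mul hRc)
    · intro x hx
      rw [interior_Ici] at hx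
      have hd := (hφd x).add (((hRd x hx)).const_mul ε)
      exact hd.differentiableAt.differentiableWithinAt
    · intro x hx
      rw [interior_Ici] at hx
      have hd : HasDerivAt (fun τ => φ τ + ε * R τ) _ x := (hφd x).add (((hRd x hx)).const_mul ε)
      rw [hd.deriv]
      have h1 := hg'' (Y x)
      have h2 := hZpos x hx.le
      have h3 := hZexp x hx.le
      have h4 := abs_le.mp h1
      rcases hε with rfl | rfl
      · nlinarith
      · nlinarith
  intro τ hτ
  have hm1 := (mono 1 (Or.inl rfl)) self_mem_Ici hτ hτ
  have hm2 := (mono (-1) (Or.inr rfl)) self_mem_Ici hτ hτ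
  simp only [hR0, hφ0, mul_zero, add_zero, one_mul, neg_one_mul] at hm1 hm2
  -- hm1 : 0 ≤ φ τ + R τ ;  hm2 : 0 ≤ φ τ - R τ
  have hZτ := hZpos τ hτ
  have hRabs : |R τ| ≤ φ τ := by
    rw [abs_le]; constructor <;> linarith
  have hWval : W τ = R τ * Z τ := by
    exact (div_mul_cancel₀ _ hZτ.ne').symm
  rw [hWval, abs_mul, abs_of_pos hZτ]
  calc |R τ| * Z τ ≤ φ τ * Z τ := mul_le_mul_of_nonneg_right hRabs hZτ.le
    _ = (K / μ) * (Real.exp (μ * τ) - 1) * Z τ := rfl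
end

section
/- Let N ≥ 1, let Ω₀ ⊆ EuclideanSpace ℝ (Fin N) be a nonempty open bounded convex set, and let u₀ : EuclideanSpace ℝ (Fin N) → ℝ be Lipschitz with Lipschitz constant K and satisfy u₀(y) = 0 for every y ∉ Ω₀. Let x₀ be a point of the frontier of Ω₀ and let n₀ be a unit vector such that ⟨y - x₀, n₀⟩ ≤ 0 for all y ∈ Ω₀. Then u₀(x) ≤ -K ⟨x - x₀, n₀⟩ for all x ∈ Ω₀. -/
open Filter Set

/-- If `u₀` is `K`-Lipschitz, vanishes outside the open bounded convex set
`Ω₀`, and `n₀` is an outward unit normal at a frontier point `x₀` (supporting hyperplane),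
then `u₀(x) ≤ -K ⟨x - x₀, n₀⟩` on `Ω₀`. -/
theorem lipschitz_convex_support_bound
    (N : ℕ) (hN : 1 ≤ N)
    (Ω₀ : Set (EuclideanSpace ℝ (Fin N)))
    (hΩ₀_ne : Ω₀.Nonempty) (hΩ₀_open : IsOpen Ω₀)
    (hΩ₀_bdd : Bornology.IsBounded Ω₀) (hΩ₀_conv : Convex ℝ Ω₀)
    (K : NNReal)
    (u₀ : EuclideanSpace ℝ (Fin N) → ℝ)
    (hu₀_lip : LipschitzWith K u₀)
    (hu₀_zero : ∀ y, y ∉ Ω₀ → u₀ y = 0)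
    (x₀ : EuclideanSpace ℝ (Fin N)) (hx₀ : x₀ ∈ frontier Ω₀)
    (n₀ : EuclideanSpace ℝ (Fin N)) (hn₀ : ‖n₀‖ = 1)
    (hsupp : ∀ y ∈ Ω₀, (inner ℝ (y - x₀) n₀ : ℝ) ≤ 0) :
    ∀ x ∈ Ω₀, u₀ x ≤ -(K : ℝ) * (inner ℝ (x - x₀) n₀ : ℝ) := by
  intro x hx
  set t : ℝ := -(inner ℝ (x - x₀) n₀ : ℝ) with ht
  have ht0 : 0 ≤ t := by
    have := hsupp x hx
    linarith
  set y : EuclideanSpace ℝ (Fin N) := x + t • n₀ with hy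
  have hinner_n : (inner ℝ n₀ n₀ : ℝ) = 1 := by
    rw [real_inner_self_eq_norm_sq, hn₀]; ring
  have hyx : (inner ℝ (y - x₀) n₀ : ℝ) = 0 := by
    have : y - x₀ = (x - x₀) + t • n₀ := by rw [hy]; abel
    rw [this, inner_add_left, inner_smul_left, hinner_n]
    simp [ht]
  have hyout : y ∉ Ω₀ := by
    intro hyin
    obtain ⟨ε, hε, hball⟩ := Metric.isOpen_iff.mp hΩ₀_open y hyin
    have hz : y + (ε / 2) • n₀ ∈ Ω₀ := by
      apply hball
      rw [Metric.mem_ball, dist_eq_norm]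
      have : y + (ε / 2) • n₀ - y = (ε / 2) • n₀ := by abel
      rw [this, norm_smul, hn₀, mul_one, Real.norm_eq_abs, abs_of_pos (half_pos hε)]
      linarith
    have := hsupp _ hz
    have heq : (inner ℝ (y + (ε / 2) • n₀ - x₀) n₀ : ℝ) = ε / 2 := by
      have h1 : y + (ε / 2) • n₀ - x₀ = (y - x₀) + (ε / 2) • n₀ := by abel
      rw [h1, inner_add_left, inner_smul_left, hyx, hinner_n]
      simp
    rw [heq] at this
    linarith
  have hu0y : u₀ y = 0 := hu₀_zero y hyout
  have hdist : dist x y = t := by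
    rw [dist_eq_norm]
    have : x - y = (-t) • n₀ := by rw [hy]; module
    rw [this, norm_smul, hn₀]
    simp [abs_of_nonneg ht0]
  have := hu₀_lip.dist_le_mul x y
  rw [hdist, hu0y, Real.dist_eq, sub_zero] at this
  have hle : u₀ x ≤ K * t := le_trans (le_abs_self _) this
  calc u₀ x ≤ (K : ℝ) * t := hle
    _ = -(K : ℝ) * (inner ℝ (x - x₀) n₀ : ℝ) := by rw [ht]; ring
end

section
/- Let m ≥ 2 be a real number, c* > 0, and U : ℝ → ℝ be continuous with U(z) = 0 for z ≥ 0, 0 < U(z) < 1 for z < 0, lim_{z → -∞} U(z) = 1, U twice continuously differentiable on (-∞, 0), z ↦ U(z)^m continuously differentiable on ℝ with (U^m)'(0) = 0 and twice differentiable on (-∞, 0), and (U^m)''(z) + c* U'(z) + U(z)(1 - U(z)) = 0 for all z < 0. Then U'(z) < 0 for all z < 0. -/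
open Filter Set Topology

private lemma sign_near_right {f : ℝ → ℝ} {x : ℝ} (hf : DifferentiableAt ℝ f x)
    (hd : deriv f x < 0) (hfx : f x = 0) :
    ∀ᶠ y in 𝓝[>] x, f y < 0 := by
  have h := hasDerivAt_iff_tendsto_slope.mp hf.hasDerivAt
  have h2 : ∀ᶠ y in 𝓝[≠] x, slope f x y < 0 :=
    Filter.Tendsto.eventually_lt_const hd h
  have h3 : ∀ᶠ y in 𝓝[>] x, slope f x y < 0 :=
    h2.filter_mono (nhdsWithin_mono x fun y hy => ne_of_gt hy)
  filter_upwards [h3, eventually_mem_nhdsWithin] with y hy hyx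
  have hxy : (0:ℝ) < y - x := sub_pos.mpr hyx
  rw [slope_def_field, hfx, sub_zero] at hy
  have := (div_lt_iff₀ hxy).mp hy
  linarith

private lemma sign_near_left {f : ℝ → ℝ} {x : ℝ} (hf : DifferentiableAt ℝ f x)
    (hd : deriv f x < 0) (hfx : f x = 0) :
    ∀ᶠ y in 𝓝[<] x, 0 < f y := by
  have h := hasDerivAt_iff_tendsto_slope.mp hf.hasDerivAt
  have h2 : ∀ᶠ y in 𝓝[≠] x, slope f x y < 0 :=
    Filter.Tendsto.eventually_lt_const hd h
  have h3 : ∀ᶠ y in 𝓝[<] x, slope f x y < 0 :=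
    h2.filter_mono (nhdsWithin_mono x fun y hy => ne_of_lt hy)
  filter_upwards [h3, eventually_mem_nhdsWithin] with y hy hyx
  have hxy : y - x < 0 := sub_neg.mpr hyx
  rw [slope_def_field, hfx, sub_zero] at hy
  rcases div_neg_iff.mp hy with ⟨h1, h2⟩ | ⟨h1, h2⟩
  · exact h1
  · linarith

/-- The sharp minimal travelling wave is strictly decreasing on the
negative half-line: U'(z) < 0 for all z < 0. -/
theorem travelling_wave_deriv_neg
    (m cstar : ℝ) (U : ℝ → ℝ)
    (hm : 2 ≤ m) (hc : 0 < cstar)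
    (hUcont : Continuous U)
    (hU0 : ∀ z : ℝ, 0 ≤ z → U z = 0)
    (hU01 : ∀ z : ℝ, z < 0 → 0 < U z ∧ U z < 1)
    (hUlim : Tendsto U atBot (nhds 1))
    (hUC2 : ContDiffOn ℝ 2 U (Set.Iio 0))
    (hVm : ContDiff ℝ 1 (fun z => U z ^ m))
    (hVm0 : deriv (fun z => U z ^ m) 0 = 0)
    (hVm2 : ∀ z : ℝ, z < 0 → DifferentiableAt ℝ (deriv (fun z => U z ^ m)) z)
    (hODE : ∀ z : ℝ, z < 0 →
      deriv (deriv (fun z => U z ^ m)) z + cstar * deriv U z + U z * (1 - U z) = 0) :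
    ∀ z : ℝ, z < 0 → deriv U z < 0 := by
  set P := deriv (fun z => U z ^ m) with hPdef
  have hm0 : (0:ℝ) < m := by linarith
  have hPcont : Continuous P := hVm.continuous_deriv le_rfl
  have hUdiff : ∀ z : ℝ, z < 0 → HasDerivAt U (deriv U z) z := by
    intro z hz
    exact ((hUC2.differentiableOn (by simp)).differentiableAt
      (Iio_mem_nhds hz)).hasDerivAt
  have hPeq : ∀ z : ℝ, z < 0 → P z = deriv U z * m * U z ^ (m - 1) := by
    intro z hz
    have h := (hUdiff z hz).rpow_const (p := m) (Or.inl (ne_of_gt (hU01 z hz).1))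
    rw [hPdef]
    exact h.deriv
  have hPzero : ∀ z : ℝ, z < 0 → P z = 0 → deriv U z = 0 := by
    intro z hz h0
    have hpow : 0 < U z ^ (m - 1) := Real.rpow_pos_of_pos (hU01 z hz).1 _
    have heq := hPeq z hz
    rw [h0] at heq
    rcases mul_eq_zero.mp heq.symm with h | h
    · rcases mul_eq_zero.mp h with h' | h'
      · exact h'
      · exact absurd h' (ne_of_gt hm0)
    · exact absurd h (ne_of_gt hpow)
  have hPderiv : ∀ z : ℝ, z < 0 → P z = 0 → deriv P z < 0 := by
    intro z hz h0
    have hode := hODE z hz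
    have hU' := hPzero z hz h0
    have h1 := (hU01 z hz).1
    have h2 := (hU01 z hz).2
    rw [hU', mul_zero] at hode
    nlinarith [mul_pos h1 (by linarith : (0:ℝ) < 1 - U z)]
  -- Step A : P ≤ 0 on Iio 0
  have stepA : ∀ z : ℝ, z < 0 → P z ≤ 0 := by
    by_contra hcon
    push_neg at hcon
    obtain ⟨z₀, hz₀, hPz₀⟩ := hcon
    by_cases hS : ∃ a, a ≤ z₀ ∧ P a = 0
    · -- let a = sSup of the zero set
      obtain ⟨a₀, ha₀⟩ := hS
      set S : Set ℝ := Iic z₀ ∩ P ⁻¹' {0} with hSdef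
      have hSmem : ∀ x, x ∈ S ↔ x ≤ z₀ ∧ P x = 0 := by
        intro x; simp [hSdef]
      have hSne : S.Nonempty := ⟨a₀, (hSmem a₀).mpr ha₀⟩
      have hSbdd : BddAbove S := ⟨z₀, fun x hx => ((hSmem x).mp hx).1⟩
      have hSclosed : IsClosed S :=
        isClosed_Iic.inter (isClosed_singleton.preimage hPcont)
      have ha : sSup S ∈ S := hSclosed.csSup_mem hSne hSbdd
      set a := sSup S with hadef
      obtain ⟨haz₀, haP0⟩ := (hSmem a).mp ha
      have hane : a ≠ z₀ := fun h => by rw [h] at haP0; linarith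
      have haz₀' : a < z₀ := lt_of_le_of_ne haz₀ hane
      have ha_neg : a < 0 := lt_trans haz₀' hz₀
      have hpos : ∀ z, a < z → z ≤ z₀ → 0 < P z := by
        intro z haz hzz
        rcases lt_or_eq_of_le hzz with h | h
        · by_contra hle
          push_neg at hle
          have hne : P z ≠ 0 := fun h0 =>
            absurd (le_csSup hSbdd ((hSmem z).mpr ⟨hzz, h0⟩)) (not_le.mpr haz)
          have hlt : P z < 0 := lt_of_le_of_ne hle hne
          obtain ⟨c, hc, hc0⟩ :=
            intermediate_value_Ioo (le_of_lt h) hPcont.continuousOn ⟨hlt, hPz₀⟩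
          have : c ≤ a := le_csSup hSbdd ((hSmem c).mpr ⟨le_of_lt hc.2, hc0⟩)
          linarith [hc.1]
        · rw [h]; exact hPz₀
      have hdP : deriv P a < 0 := hPderiv a ha_neg haP0
      have hright : ∀ᶠ y in 𝓝[>] a, P y < 0 :=
        sign_near_right (hVm2 a ha_neg) hdP haP0
      have hIoo : Ioo a z₀ ∈ 𝓝[>] a := Ioo_mem_nhdsGT_of_mem ⟨le_refl a, haz₀'⟩
      obtain ⟨y, hy1, hy2⟩ := (hright.and (eventually_of_mem hIoo fun y hy => hy)).exists
      exact absurd (hpos y hy2.1 (le_of_lt hy2.2)) (not_lt.mpr (le_of_lt hy1))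
    · -- no zero at all on Iic z₀ : P > 0 there, so U^m increasing, contradicting limit 1
      push_neg at hS
      have hpos : ∀ z, z ≤ z₀ → 0 < P z := by
        intro z hz
        rcases lt_or_eq_of_le hz with h | h
        · by_contra hle
          push_neg at hle
          have hlt : P z < 0 := lt_of_le_of_ne hle (hS z hz)
          obtain ⟨c, hc, hc0⟩ :=
            intermediate_value_Ioo (le_of_lt h) hPcont.continuousOn ⟨hlt, hPz₀⟩
          exact hS c (le_of_lt hc.2) hc0
        · rw [h]; exact hPz₀
      have hmono : StrictMonoOn (fun z => U z ^ m) (Iic z₀) := by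
        apply StrictMonoOn.mono (s := Iic z₀) ?_ le_rfl
        apply strictMonoOn_of_deriv_pos (convex_Iic z₀) hVm.continuous.continuousOn
        intro z hz
        rw [interior_Iic] at hz
        rw [← hPdef]
        exact hpos z (le_of_lt hz)
      have hVlim : Tendsto (fun z => U z ^ m) atBot (𝓝 1) := by
        have h1 : ContinuousAt (fun x : ℝ => x ^ m) 1 :=
          Real.continuousAt_rpow_const 1 m (Or.inl one_ne_zero)
        have := h1.tendsto.comp hUlim
        simpa [Real.one_rpow, Function.comp_def] using this
      have hle : (1:ℝ) ≤ U z₀ ^ m := by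
        apply le_of_tendsto hVlim
        filter_upwards [eventually_le_atBot z₀] with z hz
        exact hmono.monotoneOn (mem_Iic.mpr hz) (mem_Iic.mpr le_rfl) hz
      have hlt : U z₀ ^ m < 1 :=
        Real.rpow_lt_one (le_of_lt (hU01 z₀ hz₀).1) (hU01 z₀ hz₀).2 hm0
      linarith
  -- Step B : P < 0 on Iio 0
  have stepB : ∀ z : ℝ, z < 0 → P z < 0 := by
    intro z hz
    rcases lt_or_eq_of_le (stepA z hz) with h | h
    · exact h
    · exfalso
      have hdP : deriv P z < 0 := hPderiv z hz h
      have hleft : ∀ᶠ y in 𝓝[<] z, 0 < P y :=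
        sign_near_left (hVm2 z hz) hdP h
      obtain ⟨y, hy1, hy2⟩ := (hleft.and eventually_mem_nhdsWithin).exists
      exact absurd hy1 (not_lt.mpr (stepA y (lt_trans hy2 hz)))
  -- conclude
  intro z hz
  have h := stepB z hz
  rw [hPeq z hz] at h
  have hpow : 0 < U z ^ (m - 1) := Real.rpow_pos_of_pos (hU01 z hz).1 _
  by_contra hge
  push_neg at hge
  nlinarith [mul_nonneg (mul_nonneg hge hm0.le) hpow.le]
end

section
/- Let m ≥ 2 be a real number, c* > 0, and U : ℝ → ℝ be continuous with U(z) = 0 for z ≥ 0, 0 < U(z) < 1 for z < 0, lim_{z → -∞} U(z) = 1, U twice continuously differentiable on (-∞, 0), z ↦ U(z)^m continuously differentiable on ℝ with (U^m)'(0) = 0 and twice differentiable on (-∞, 0), and (U^m)''(z) + c* U'(z) + U(z)(1 - U(z)) = 0 for all z < 0. Assume moreover U'(z) < 0 for all z < 0. Then there exists C > 0 such that |(U^m)'(z)| ≤ C · U(z) for all z ∈ ℝ. -/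
open Filter Set

/-- `|(U^m)'(z)| ≤ C U(z)` for the sharp minimal travelling wave. -/
theorem travelling_wave_Um_deriv_bound
    (m cstar : ℝ) (U : ℝ → ℝ)
    (hm : 2 ≤ m) (hc : 0 < cstar)
    (hUcont : Continuous U)
    (hU0 : ∀ z : ℝ, 0 ≤ z → U z = 0)
    (hU01 : ∀ z : ℝ, z < 0 → 0 < U z ∧ U z < 1)
    (hUlim : Tendsto U atBot (nhds 1))
    (hUC2 : ContDiffOn ℝ 2 U (Set.Iio 0))
    (hVm : ContDiff ℝ 1 (fun z => U z ^ m))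
    (hVm0 : deriv (fun z => U z ^ m) 0 = 0)
    (hVm2 : ∀ z : ℝ, z < 0 → DifferentiableAt ℝ (deriv (fun z => U z ^ m)) z)
    (hODE : ∀ z : ℝ, z < 0 →
      deriv (deriv (fun z => U z ^ m)) z + cstar * deriv U z + U z * (1 - U z) = 0)
    (hU' : ∀ z : ℝ, z < 0 → deriv U z < 0) :
    ∃ C > (0:ℝ), ∀ z : ℝ, |deriv (fun z => U z ^ m) z| ≤ C * U z := by
  set V : ℝ → ℝ := fun z => U z ^ m with hV
  have hm0 : (0:ℝ) < m := by linarith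
  -- differentiability of U on Iio 0
  have hUdiff : ∀ z : ℝ, z < 0 → DifferentiableAt ℝ U z := by
    intro z hz
    have := (hUC2.differentiableOn (by norm_num)) z hz
    exact this.differentiableAt (isOpen_Iio.mem_nhds hz)
  -- deriv V z ≤ 0 for z < 0
  have hVle : ∀ z : ℝ, z < 0 → deriv V z ≤ 0 := by
    intro z hz
    have hUz : 0 < U z := (hU01 z hz).1
    have hU'at : HasDerivAt U (deriv U z) z := (hUdiff z hz).hasDerivAt
    have hrp : HasDerivAt (fun x : ℝ => x ^ m) (m * U z ^ (m - 1)) (U z) :=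
      Real.hasDerivAt_rpow_const (Or.inl (ne_of_gt hUz))
    have hVat : HasDerivAt V (m * U z ^ (m - 1) * deriv U z) z := hrp.comp z hU'at
    rw [hVat.deriv]
    have h1 : 0 < U z ^ (m - 1) := Real.rpow_pos_of_pos hUz _
    exact le_of_lt (mul_neg_of_pos_of_neg (mul_pos hm0 h1) (hU' z hz))
  -- F
  set F : ℝ → ℝ := fun z => -(deriv V z) - cstar * U z with hF
  have hFcont : ContinuousOn F (Set.Iic 0) :=
    ((hVm.continuous_deriv le_rfl).neg.sub (continuous_const.mul hUcont)).continuousOn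
  have hFderiv : ∀ z ∈ interior (Set.Iic (0:ℝ)), 0 < deriv F z := by
    intro z hz
    rw [interior_Iic] at hz
    have hz' : z < 0 := hz
    have h1 : HasDerivAt (deriv V) (deriv (deriv V) z) z := (hVm2 z hz').hasDerivAt
    have h2 : HasDerivAt U (deriv U z) z := (hUdiff z hz').hasDerivAt
    have h3 : HasDerivAt F (-(deriv (deriv V) z) - cstar * deriv U z) z :=
      h1.neg.sub ((h2.const_mul cstar))
    rw [h3.deriv]
    have := hODE z hz'
    have hUz := hU01 z hz'
    nlinarith
  have hmono : StrictMonoOn F (Set.Iic 0) :=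
    strictMonoOn_of_deriv_pos (convex_Iic 0) hFcont hFderiv
  have hF0 : F 0 = 0 := by
    simp only [hF, hV, hVm0, hU0 0 le_rfl, neg_zero, mul_zero, sub_zero]
    exact neg_eq_zero.mpr hVm0
  -- deriv V z = 0 for z ≥ 0
  have hVz0 : ∀ z : ℝ, 0 ≤ z → deriv V z = 0 := by
    intro z hz
    rcases eq_or_lt_of_le hz with h | h
    · rw [← h]; exact hVm0
    · have hev : V =ᶠ[nhds z] (fun _ => (0:ℝ)) := by
        filter_upwards [isOpen_Ioi.mem_nhds h] with y hy
        simp only [hV, hU0 y (le_of_lt hy), Real.zero_rpow (by linarith : m ≠ 0)]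
      rw [hev.deriv_eq]
      exact deriv_const z 0
  refine ⟨cstar, hc, fun z => ?_⟩
  rcases lt_or_ge z 0 with hz | hz
  · have hFz : F z < 0 := by
      have := hmono (Set.mem_Iic.mpr hz.le) (Set.mem_Iic.mpr le_rfl) hz
      rw [hF0] at this; exact this
    have hUz : 0 < U z := (hU01 z hz).1
    rw [abs_le]
    constructor
    · simp only [hF] at hFz; linarith
    · have := hVle z hz; nlinarith
  · rw [hVz0 z hz, hU0 z hz, abs_zero, mul_zero]
end

section
/- Let m ≥ 2 be a real number, c* > 0, and U : ℝ → ℝ be continuous with U(z) = 0 for z ≥ 0, 0 < U(z) < 1 for z < 0, lim_{z → -∞} U(z) = 1, U twice continuously differentiable on (-∞, 0), z ↦ U(z)^m continuously differentiable on ℝ with (U^m)'(0) = 0 and twice differentiable on (-∞, 0), and (U^m)''(z) + c* U'(z) + U(z)(1 - U(z)) = 0 for all z < 0. Assume moreover U'(z) < 0 for all z < 0. Then there exist C > 0 and β > 0 such that 0 < 1 - U(z) ≤ C e^{-β|z|} for all z ≤ 0. -/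
open Filter Set

private lemma mono_helper {f : ℝ → ℝ} {a b : ℝ} (hab : a ≤ b)
    (hcont : ContinuousOn f (Set.Icc a b))
    (hd : ∀ x ∈ Set.Ioo a b, ∃ f', HasDerivAt f f' x ∧ 0 ≤ f') :
    f a ≤ f b := by
  have h1 : MonotoneOn f (Set.Icc a b) := by
    apply monotoneOn_of_deriv_nonneg (convex_Icc a b) hcont
    · intro x hx
      rw [interior_Icc] at hx
      obtain ⟨f', hf', _⟩ := hd x hx
      exact hf'.differentiableAt.differentiableWithinAt
    · intro x hx
      rw [interior_Icc] at hx
      obtain ⟨f', hf', h0⟩ := hd x hx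
      rw [hf'.deriv]; exact h0
  exact h1 (left_mem_Icc.2 hab) (right_mem_Icc.2 hab) hab

set_option maxHeartbeats 1000000 in
/-- `0 < 1 - U(z) ≤ C e^{-β|z|}` for `z ≤ 0` for the sharp minimal
travelling wave. -/
theorem travelling_wave_exponential_convergence
    (m cstar : ℝ) (U : ℝ → ℝ)
    (hm : 2 ≤ m) (hc : 0 < cstar)
    (hUcont : Continuous U)
    (hU0 : ∀ z : ℝ, 0 ≤ z → U z = 0)
    (hU01 : ∀ z : ℝ, z < 0 → 0 < U z ∧ U z < 1)
    (hUlim : Tendsto U atBot (nhds 1))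
    (hUC2 : ContDiffOn ℝ 2 U (Set.Iio 0))
    (hVm : ContDiff ℝ 1 (fun z => U z ^ m))
    (hVm0 : deriv (fun z => U z ^ m) 0 = 0)
    (hVm2 : ∀ z : ℝ, z < 0 → DifferentiableAt ℝ (deriv (fun z => U z ^ m)) z)
    (hODE : ∀ z : ℝ, z < 0 →
      deriv (deriv (fun z => U z ^ m)) z + cstar * deriv U z + U z * (1 - U z) = 0)
    (hU' : ∀ z : ℝ, z < 0 → deriv U z < 0) :
    ∃ C > (0:ℝ), ∃ β > (0:ℝ), ∀ z : ℝ, z ≤ 0 →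
      0 < 1 - U z ∧ 1 - U z ≤ C * Real.exp (-β * |z|) := by
  have hm0 : (0:ℝ) < m := by linarith
  obtain ⟨V, hVdef⟩ : ∃ V : ℝ → ℝ, V = fun z => U z ^ m := ⟨_, rfl⟩
  rw [← hVdef] at hVm hVm0 hVm2 hODE
  have hVapp : ∀ z : ℝ, V z = U z ^ m := fun z => by rw [hVdef]
  -- a point z0 < 0 to the left of which U ≥ 1/2
  obtain ⟨z0', hz0'⟩ : ∃ a : ℝ, ∀ z ≤ a, 1/2 < U z := by
    have h : ∀ᶠ z in atBot, 1/2 < U z :=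
      hUlim.eventually (eventually_gt_nhds (by norm_num))
    exact Filter.eventually_atBot.mp h
  obtain ⟨z0, hz0def⟩ : ∃ x : ℝ, x = min z0' (-1) := ⟨_, rfl⟩
  have hz0neg : z0 < 0 := by
    rw [hz0def]; exact lt_of_le_of_lt (min_le_right _ _) (by norm_num)
  have hz0half : ∀ z ≤ z0, 1/2 ≤ U z := by
    intro z hz
    rw [hz0def] at hz
    exact (hz0' z (le_trans hz (min_le_left _ _))).le
  -- constants
  obtain ⟨δ, hδdef⟩ : ∃ x : ℝ, x = (1/2 : ℝ) ^ (m - 1) := ⟨_, rfl⟩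
  have hδ : 0 < δ := by rw [hδdef]; exact Real.rpow_pos_of_pos (by norm_num) _
  obtain ⟨A, hAdef⟩ : ∃ x : ℝ, x = cstar / (m * δ) := ⟨_, rfl⟩
  have hA : 0 < A := by rw [hAdef]; exact div_pos hc (mul_pos hm0 hδ)
  obtain ⟨κ, hκdef⟩ : ∃ x : ℝ, x = 1 / (2 * m) := ⟨_, rfl⟩
  have hκ : 0 < κ := by rw [hκdef]; positivity
  obtain ⟨μ, hμdef⟩ : ∃ x : ℝ, x = min 1 (κ / (2 * (A + 1))) := ⟨_, rfl⟩
  have hμ : 0 < μ := by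
    rw [hμdef]; exact lt_min one_pos (div_pos hκ (by linarith))
  have hμ1 : μ ≤ 1 := by rw [hμdef]; exact min_le_left _ _
  have hμ2 : μ * (A + μ) ≤ κ / 2 := by
    have h1 : μ ≤ κ / (2 * (A + 1)) := by rw [hμdef]; exact min_le_right _ _
    have h2 : μ * (A + μ) ≤ (κ / (2 * (A + 1))) * (A + 1) :=
      mul_le_mul h1 (by linarith) (by linarith)
        (le_of_lt (div_pos hκ (by linarith)))
    have hA1 : A + 1 ≠ 0 := by linarith
    have h3 : (κ / (2 * (A + 1))) * (A + 1) = κ / 2 := by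
      field_simp
    linarith
  obtain ⟨ν, hνdef⟩ : ∃ x : ℝ, x = κ / (2 * μ) := ⟨_, rfl⟩
  have hν : 0 < ν := by rw [hνdef]; exact div_pos hκ (by linarith)
  -- basic pointwise facts
  have hUpos : ∀ z : ℝ, z < 0 → 0 < U z := fun z hz => (hU01 z hz).1
  have hUlt1 : ∀ z : ℝ, z < 0 → U z < 1 := fun z hz => (hU01 z hz).2
  have hUdiff : ∀ z : ℝ, z < 0 → HasDerivAt U (deriv U z) z := by
    intro z hz
    have h1 : DifferentiableOn ℝ U (Set.Iio 0) := hUC2.differentiableOn (by norm_num)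
    exact ((h1 z hz).differentiableAt (Iio_mem_nhds hz)).hasDerivAt
  have hVderiv : ∀ z : ℝ, z < 0 → deriv V z = deriv U z * m * U z ^ (m - 1) := by
    intro z hz
    rw [hVdef]
    exact ((hUdiff z hz).rpow_const (Or.inl (ne_of_gt (hUpos z hz)))).deriv
  have hVcont : Continuous V := hVm.continuous
  have hVdiff : ∀ z : ℝ, DifferentiableAt ℝ V z := fun z => (hVm.differentiable one_ne_zero) z
  have hDVcont : Continuous (deriv V) := hVm.continuous_deriv le_rfl
  -- the auxiliary function g
  obtain ⟨g, hgdef⟩ : ∃ g : ℝ → ℝ, g = fun z => -(deriv V z) - μ * (1 - V z) := ⟨_, rfl⟩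
  have hgcont : Continuous g := by
    rw [hgdef]
    exact (hDVcont.neg).sub (continuous_const.mul (continuous_const.sub hVcont))
  have hgderiv : ∀ z : ℝ, z < 0 →
      HasDerivAt g (-(deriv (deriv V) z) + μ * deriv V z) z := by
    intro z hz
    rw [hgdef]
    have h1 : HasDerivAt (fun x => deriv V x) (deriv (deriv V) z) z := (hVm2 z hz).hasDerivAt
    have h2 : HasDerivAt (fun x => (1:ℝ) - V x) (0 - deriv V z) z :=
      (hasDerivAt_const z (1:ℝ)).sub (hVdiff z).hasDerivAt
    have h3 := (h1.neg).sub (h2.const_mul μ)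
    exact h3.congr_deriv (by ring)
  -- the key differential inequality: where g < 0 (and z ≤ z0), g' + ν g ≥ 0
  have hkey : ∀ z : ℝ, z ≤ z0 → g z < 0 →
      0 ≤ (-(deriv (deriv V) z) + μ * deriv V z) + ν * g z := by
    intro z hz hgz
    have hzneg : z < 0 := lt_of_le_of_lt hz hz0neg
    have hu2 : 1/2 ≤ U z := hz0half z hz
    have hu1 : U z < 1 := hUlt1 z hzneg
    have hu0 : 0 < U z := hUpos z hzneg
    have hu' : deriv U z < 0 := hU' z hzneg
    have hDV : deriv V z = deriv U z * m * U z ^ (m - 1) := hVderiv z hzneg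
    have hD2 : deriv (deriv V) z = -(cstar * deriv U z + U z * (1 - U z)) := by
      have h := hODE z hzneg; linarith
    have hp1 : δ ≤ U z ^ (m - 1) := by
      rw [hδdef]
      exact Real.rpow_le_rpow (by norm_num) hu2 (by linarith)
    have hp0 : 0 < U z ^ (m - 1) := Real.rpow_pos_of_pos hu0 _
    have hVle : V z ≤ 1 := by
      rw [hVapp z]
      exact Real.rpow_le_one hu0.le hu1.le (by linarith)
    have hY0 : 0 ≤ 1 - V z := by linarith
    have hbern : 1 - V z ≤ m * (1 - U z) := by
      have h := one_add_mul_self_le_rpow_one_add (s := U z - 1) (by linarith) (p := m)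
        (by linarith)
      have h2 : (1 + (U z - 1)) = U z := by ring
      rw [h2, ← hVapp z] at h
      linarith
    rw [hgdef] at hgz
    simp only at hgz
    rw [hDV] at hgz
    rw [hgdef]
    simp only
    rw [hDV, hD2]
    have h_yp : 0 ≤ -(deriv U z * m * U z ^ (m - 1)) := by
      nlinarith [mul_pos (mul_pos (neg_pos.mpr hu') hm0) hp0]
    have h_P_le : -(deriv U z * m * U z ^ (m - 1)) ≤ μ * (1 - V z) := by linarith
    have hAδ : A * (m * δ) = cstar := by
      rw [hAdef]
      exact div_mul_cancel₀ cstar (ne_of_gt (mul_pos hm0 hδ))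
    have hstep1 : 0 ≤ cstar * deriv U z + A * (-(deriv U z * m * U z ^ (m - 1))) := by
      have h1 : cstar ≤ A * (m * U z ^ (m - 1)) := by
        rw [← hAδ]
        have h2 : m * δ ≤ m * U z ^ (m - 1) := by nlinarith
        exact mul_le_mul_of_nonneg_left h2 hA.le
      linarith [mul_nonneg (sub_nonneg.2 h1) (neg_nonneg.2 hu'.le)]
    have h3 : κ * (1 - V z) ≤ U z * (1 - U z) := by
      have a2 : (1/2) * (1 - U z) ≤ U z * (1 - U z) := by nlinarith
      have a3 : κ * (1 - V z) ≤ κ * (m * (1 - U z)) := mul_le_mul_of_nonneg_left hbern hκ.le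
      have a4 : κ * (m * (1 - U z)) = (1/2) * (1 - U z) := by
        rw [hκdef]
        field_simp
      linarith
    have h5 : (A + μ) * (-(deriv U z * m * U z ^ (m - 1))) ≤ (A + μ) * (μ * (1 - V z)) :=
      mul_le_mul_of_nonneg_left h_P_le (by linarith)
    have h6 : (A + μ) * (μ * (1 - V z)) ≤ (κ / 2) * (1 - V z) := by
      nlinarith [mul_le_mul_of_nonneg_right hμ2 hY0]
    have h7 : ν * (μ * (1 - V z)) = (κ / 2) * (1 - V z) := by
      rw [hνdef]
      field_simp
    have h4 : 0 ≤ ν * (-(deriv U z * m * U z ^ (m - 1))) := mul_nonneg hν.le h_yp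
    linarith [hstep1, h3, h4, h5, h6, h7]
  -- monotonicity of z ↦ g z * exp (ν z) on intervals where g < 0
  have hmono : ∀ a b : ℝ, a ≤ b → b ≤ z0 → (∀ x, a < x → x < b → g x < 0) →
      g a * Real.exp (ν * a) ≤ g b * Real.exp (ν * b) := by
    intro a b hab hbz0 hneg
    apply mono_helper (f := fun z => g z * Real.exp (ν * z)) hab
    · exact (hgcont.mul (Real.continuous_exp.comp
        (continuous_const.mul continuous_id))).continuousOn
    · intro x hx
      have hxz0 : x ≤ z0 := le_trans hx.2.le hbz0
      have hx0 : x < 0 := lt_of_le_of_lt hxz0 hz0neg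
      have hgd := hgderiv x hx0
      have h1 : HasDerivAt (fun z : ℝ => ν * z) ν x := by
        simpa using (hasDerivAt_id x).const_mul ν
      have hed : HasDerivAt (fun z => Real.exp (ν * z)) (Real.exp (ν * x) * ν) x := h1.exp
      refine ⟨_, hgd.mul hed, ?_⟩
      have hgx : g x < 0 := hneg x hx.1 hx.2
      have hk := hkey x hxz0 hgx
      nlinarith [mul_nonneg (Real.exp_pos (ν * x)).le hk]
  -- the main claim : g ≥ 0 on (-∞, z0]
  have hg0 : ∀ z ≤ z0, 0 ≤ g z := by
    by_contra hcon
    push_neg at hcon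
    obtain ⟨z1, hz1le, hz1g⟩ := hcon
    -- step A : g < 0 on all of (-∞, z1]
    have stepA : ∀ z ≤ z1, g z < 0 := by
      intro z hz
      by_contra hge
      push_neg at hge
      have hzlt : z < z1 := by
        rcases lt_or_eq_of_le hz with h | h
        · exact h
        · rw [h] at hge; linarith
      have hSne : (Set.Icc z z1 ∩ {x | 0 ≤ g x}).Nonempty :=
        ⟨z, ⟨⟨le_refl z, hzlt.le⟩, hge⟩⟩
      have hSbdd : BddAbove (Set.Icc z z1 ∩ {x | 0 ≤ g x}) :=
        ⟨z1, fun x hx => hx.1.2⟩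
      have hScl : IsClosed (Set.Icc z z1 ∩ {x | 0 ≤ g x}) :=
        isClosed_Icc.inter (isClosed_le continuous_const hgcont)
      set s := sSup (Set.Icc z z1 ∩ {x | 0 ≤ g x}) with hsdef
      have hsmem : s ∈ Set.Icc z z1 ∩ {x | 0 ≤ g x} := hScl.csSup_mem hSne hSbdd
      have hs1 : s < z1 := by
        rcases lt_or_eq_of_le hsmem.1.2 with h | h
        · exact h
        · exfalso
          have h2 := hsmem.2
          simp only [Set.mem_setOf_eq] at h2
          rw [h] at h2
          linarith
      have hneg : ∀ x, s < x → x < z1 → g x < 0 := by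
        intro x h1 h2
        by_contra h3
        push_neg at h3
        have hxin : x ∈ Set.Icc z z1 ∩ {x | 0 ≤ g x} :=
          ⟨⟨le_trans hsmem.1.1 h1.le, h2.le⟩, h3⟩
        have := le_csSup hSbdd hxin
        linarith
      have hm2 := hmono s z1 hs1.le hz1le hneg
      have hq1 : 0 ≤ g s * Real.exp (ν * s) :=
        mul_nonneg hsmem.2 (Real.exp_pos _).le
      have hq2 : g z1 * Real.exp (ν * z1) < 0 :=
        mul_neg_of_neg_of_pos hz1g (Real.exp_pos _)
      linarith
    -- lower bound for g
    have hlb : ∀ z : ℝ, z < 0 → -μ ≤ g z := by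
      intro z hz
      have hDV := hVderiv z hz
      have hu' := hU' z hz
      have hu0 := hUpos z hz
      have hp0 : (0:ℝ) < U z ^ (m - 1) := Real.rpow_pos_of_pos hu0 _
      have hVz0 : 0 < V z := by rw [hVapp z]; exact Real.rpow_pos_of_pos hu0 m
      have h1 : 0 ≤ -(deriv V z) := by
        rw [hDV]; nlinarith [mul_pos (mul_pos (neg_pos.mpr hu') hm0) hp0]
      have h2 : μ * (1 - V z) ≤ μ := by nlinarith
      rw [hgdef]
      simp only
      linarith
    -- blow-up contradiction
    set K : ℝ := g z1 * Real.exp (ν * z1) with hKdef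
    have hK : K < 0 := mul_neg_of_neg_of_pos hz1g (Real.exp_pos _)
    have stepC : ∀ z ≤ z1, g z * Real.exp (ν * z) ≤ K :=
      fun z hz => hmono z z1 hz hz1le (fun x _ h2 => stepA x h2.le)
    obtain ⟨L, hLdef⟩ : ∃ x : ℝ, x = Real.log (-K / (μ + 1)) / ν := ⟨_, rfl⟩
    obtain ⟨z2, hz2def⟩ : ∃ x : ℝ, x = min (min z1 (-1)) L := ⟨_, rfl⟩
    have hz2z1 : z2 ≤ z1 := by
      rw [hz2def]; exact le_trans (min_le_left _ _) (min_le_left _ _)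
    have hz2neg : z2 < 0 := by
      have h : z2 ≤ -1 := by
        rw [hz2def]; exact le_trans (min_le_left _ _) (min_le_right z1 (-1))
      linarith
    have hE : Real.exp (ν * z2) ≤ -K / (μ + 1) := by
      have h1 : ν * z2 ≤ Real.log (-K / (μ + 1)) := by
        have hle : z2 ≤ L := by rw [hz2def]; exact min_le_right _ _
        have h2 : ν * z2 ≤ ν * L := mul_le_mul_of_nonneg_left hle hν.le
        have h3 : ν * L = Real.log (-K / (μ + 1)) := by
          rw [hLdef]
          field_simp
        linarith
      calc Real.exp (ν * z2) ≤ Real.exp (Real.log (-K / (μ + 1))) := Real.exp_le_exp.2 h1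
        _ = -K / (μ + 1) := Real.exp_log (div_pos (by linarith) (by linarith))
    have hcontr1 := stepC z2 hz2z1
    have hcontr2 := hlb z2 hz2neg
    have hEpos := Real.exp_pos (ν * z2)
    have h5 : μ * Real.exp (ν * z2) < -K := by
      have h6 : Real.exp (ν * z2) * (μ + 1) ≤ -K :=
        (le_div_iff₀ (by linarith : (0:ℝ) < μ + 1)).1 hE
      nlinarith
    nlinarith [mul_le_mul_of_nonneg_right hcontr2 hEpos.le]
  -- conclusion
  refine ⟨Real.exp (-(μ * z0)), Real.exp_pos _, μ, hμ, ?_⟩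
  intro z hzle
  constructor
  · rcases lt_or_eq_of_le hzle with h | h
    · linarith [(hU01 z h).2]
    · rw [h, hU0 0 le_rfl]; norm_num
  · have habs : |z| = -z := abs_of_nonpos hzle
    rw [habs]
    have harg : -μ * -z = μ * z := by ring
    rw [harg]
    by_cases hzz0 : z ≤ z0
    · -- main case : use monotonicity of (1 - V) e^{-μ·}
      have hzneg : z < 0 := lt_of_le_of_lt hzz0 hz0neg
      have h1 : (1 - V z) * Real.exp (-(μ * z)) ≤ (1 - V z0) * Real.exp (-(μ * z0)) := by
        apply mono_helper (f := fun x => (1 - V x) * Real.exp (-(μ * x))) hzz0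
        · exact ((continuous_const.sub hVcont).mul (Real.continuous_exp.comp
            ((continuous_const.mul continuous_id).neg))).continuousOn
        · intro x hx
          have hx0 : x < 0 := lt_of_lt_of_le hx.2 hz0neg.le
          have hd1 : HasDerivAt (fun x => (1:ℝ) - V x) (0 - deriv V x) x :=
            (hasDerivAt_const x (1:ℝ)).sub (hVdiff x).hasDerivAt
          have hd2a : HasDerivAt (fun x : ℝ => -(μ * x)) (-μ) x := by
            exact (((hasDerivAt_id x).const_mul μ).neg).congr_deriv (by simp)
          have hd2 : HasDerivAt (fun x => Real.exp (-(μ * x)))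
              (Real.exp (-(μ * x)) * -μ) x := hd2a.exp
          refine ⟨_, hd1.mul hd2, ?_⟩
          have hg := hg0 x hx.2.le
          rw [hgdef] at hg
          simp only at hg
          nlinarith [mul_nonneg (Real.exp_pos (-(μ * x))).le hg]
      have h2 : U z ^ m ≤ U z := by
        have h3 := Real.rpow_le_rpow_of_exponent_ge (hUpos z hzneg) (hUlt1 z hzneg).le
          (by linarith : (1:ℝ) ≤ m)
        rwa [Real.rpow_one] at h3
      rw [← hVapp z] at h2
      have h5 : 0 ≤ V z0 := by
        rw [hVapp z0]; exact Real.rpow_nonneg (hUpos z0 hz0neg).le m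
      -- multiply h1 by exp (μ z)
      have h6 := mul_le_mul_of_nonneg_right h1 (Real.exp_pos (μ * z)).le
      have h7 : Real.exp (-(μ * z)) * Real.exp (μ * z) = 1 := by
        rw [← Real.exp_add]; norm_num
      have h8 : (1 - V z) * Real.exp (-(μ * z)) * Real.exp (μ * z) = 1 - V z := by
        rw [mul_assoc, h7, mul_one]
      rw [h8] at h6
      -- h6 : 1 - V z ≤ (1 - V z0) * exp (-(μ z0)) * exp (μ z)
      have h9 : (1 - V z0) * Real.exp (-(μ * z0)) * Real.exp (μ * z) ≤
          Real.exp (-(μ * z0)) * Real.exp (μ * z) := by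
        nlinarith [mul_nonneg (mul_nonneg h5 (Real.exp_pos (-(μ * z0))).le)
          (Real.exp_pos (μ * z)).le]
      linarith [h2, h6, h9]
    · -- easy case : z0 < z ≤ 0
      push_neg at hzz0
      have hU0' : 0 ≤ U z := by
        rcases lt_or_eq_of_le hzle with h | h
        · exact (hU01 z h).1.le
        · rw [h, hU0 0 le_rfl]
      have h1 : (1:ℝ) ≤ Real.exp (-(μ * z0)) * Real.exp (μ * z) := by
        rw [← Real.exp_add]
        calc (1:ℝ) = Real.exp 0 := Real.exp_zero.symm
          _ ≤ Real.exp (-(μ * z0) + μ * z) := Real.exp_le_exp.mpr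
            (by nlinarith [mul_nonneg hμ.le (by linarith : (0:ℝ) ≤ z - z0)])
      linarith
end

section
/- Let m ≥ 2 be a real number, c* > 0, and U : ℝ → ℝ be continuous with U(z) = 0 for z ≥ 0, 0 < U(z) < 1 for z < 0, lim_{z → -∞} U(z) = 1, U twice continuously differentiable on (-∞, 0), z ↦ U(z)^m continuously differentiable on ℝ with (U^m)'(0) = 0 and twice differentiable on (-∞, 0), and (U^m)''(z) + c* U'(z) + U(z)(1 - U(z)) = 0 for all z < 0. Assume moreover U'(z) < 0 for all z < 0. Then there exists C > 0 such that |z · U'(z)| ≤ C · U(z) for all z ≤ -1. -/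
open Filter Set

set_option maxHeartbeats 1000000 in
/-- `|z U'(z)| ≤ C U(z)` for `z ≤ -1` for the sharp minimal
travelling wave. -/
theorem travelling_wave_zU_deriv_bound
    (m cstar : ℝ) (U : ℝ → ℝ)
    (hm : 2 ≤ m) (hc : 0 < cstar)
    (hUcont : Continuous U)
    (hU0 : ∀ z : ℝ, 0 ≤ z → U z = 0)
    (hU01 : ∀ z : ℝ, z < 0 → 0 < U z ∧ U z < 1)
    (hUlim : Tendsto U atBot (nhds 1))
    (hUC2 : ContDiffOn ℝ 2 U (Set.Iio 0))
    (hVm : ContDiff ℝ 1 (fun z => U z ^ m))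
    (hVm0 : deriv (fun z => U z ^ m) 0 = 0)
    (hVm2 : ∀ z : ℝ, z < 0 → DifferentiableAt ℝ (deriv (fun z => U z ^ m)) z)
    (hODE : ∀ z : ℝ, z < 0 →
      deriv (deriv (fun z => U z ^ m)) z + cstar * deriv U z + U z * (1 - U z) = 0)
    (hU' : ∀ z : ℝ, z < 0 → deriv U z < 0) :
    ∃ C > (0:ℝ), ∀ z : ℝ, z ≤ -1 → |z * deriv U z| ≤ C * U z := by
  have hm0 : (0:ℝ) < m := by linarith
  have hm1 : (0:ℝ) ≤ m - 1 := by linarith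
  set V : ℝ → ℝ := fun z => U z ^ m with hVdef
  -- U is differentiable on Iio 0
  have hUdiffOn : DifferentiableOn ℝ U (Iio 0) := hUC2.differentiableOn (by norm_num)
  have hUdiff : ∀ z : ℝ, z < 0 → HasDerivAt U (deriv U z) z := by
    intro z hz
    exact ((hUdiffOn z hz).differentiableAt (Iio_mem_nhds hz)).hasDerivAt
  -- chain rule for V = U^m
  have hderivV : ∀ z : ℝ, z < 0 → deriv V z = deriv U z * m * U z ^ (m - 1) := by
    intro z hz
    exact ((hUdiff z hz).rpow_const (Or.inl (ne_of_gt (hU01 z hz).1))).deriv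
  -- constants
  set b : ℝ := cstar + 1 with hbdef
  have hb : (0:ℝ) < b := by linarith
  set α : ℝ := min (1/m) (1/(2*b)) with hαdef
  have hα : (0:ℝ) < α := by
    apply lt_min <;> positivity
  have hαm : α * m ≤ 1 := by
    have : α ≤ 1/m := min_le_left _ _
    calc α * m ≤ (1/m) * m := by nlinarith
    _ = 1 := by field_simp
  have hαb : α * b ≤ 1/2 := by
    have : α ≤ 1/(2*b) := min_le_right _ _
    calc α * b ≤ (1/(2*b)) * b := by nlinarith
    _ = 1/2 := by field_simp
  -- the Lyapunov function h
  set h : ℝ → ℝ := fun z => -(deriv V z) + b * (1 - U z) with hhdef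
  have hhderiv : ∀ z : ℝ, z < 0 →
      HasDerivAt h (-(deriv U z) + U z * (1 - U z)) z := by
    intro z hz
    have h1 : HasDerivAt (fun z => -(deriv V z))
        (-(deriv (deriv V) z)) z := ((hVm2 z hz).hasDerivAt).neg
    have h2 : HasDerivAt (fun z => b * (1 - U z))
        (b * (0 - deriv U z)) z :=
      (((hasDerivAt_const z (1:ℝ)).sub (hUdiff z hz))).const_mul b
    have h3 := h1.add h2
    refine h3.congr_deriv ?_
    have := hODE z hz
    rw [hbdef]; linarith
  -- choose z1 with U ≥ 1/2 to its left
  obtain ⟨a, ha⟩ := eventually_atBot.mp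
    (hUlim.eventually (eventually_gt_nhds (by norm_num : (1/2:ℝ) < 1)))
  set z1 : ℝ := min a (-2) with hz1def
  have hz1neg : z1 < 0 := lt_of_le_of_lt (min_le_right _ _) (by norm_num)
  have hz1le : z1 ≤ -2 := min_le_right _ _
  have hUhalf : ∀ z : ℝ, z ≤ z1 → 1/2 ≤ U z := by
    intro z hz
    exact le_of_lt (ha z (le_trans hz (min_le_left _ _)))
  -- key differential inequality: for z < z1, α * h z ≤ h' z
  have hkey : ∀ z : ℝ, z ≤ z1 → α * h z ≤ -(deriv U z) + U z * (1 - U z) := by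
    intro z hz
    have hz0 : z < 0 := lt_of_le_of_lt hz hz1neg
    have hU1 : U z < 1 := (hU01 z hz0).2
    have hUpos : 0 < U z := (hU01 z hz0).1
    have hUh : 1/2 ≤ U z := hUhalf z hz
    have hU'neg : deriv U z < 0 := hU' z hz0
    have hpow1 : U z ^ (m - 1) ≤ 1 :=
      Real.rpow_le_one (le_of_lt hUpos) (le_of_lt hU1) hm1
    have hpowpos : 0 < U z ^ (m - 1) := Real.rpow_pos_of_pos hUpos _
    rw [hhdef]
    simp only
    rw [hderivV z hz0]
    -- goal: α * (-(deriv U z * m * U z ^ (m-1)) + b * (1 - U z)) ≤ -(deriv U z) + U z * (1 - U z)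
    have e1 : α * (-(deriv U z * m * U z ^ (m - 1))) ≤ -(deriv U z) := by
      have h5 : (0:ℝ) ≤ -(deriv U z) * m := by nlinarith
      have h4 : -(deriv U z * m * U z ^ (m - 1)) ≤ -(deriv U z) * m := by
        have := mul_le_mul_of_nonneg_left hpow1 h5
        nlinarith
      have h6 : α * (-(deriv U z * m * U z ^ (m - 1))) ≤ α * (-(deriv U z) * m) :=
        mul_le_mul_of_nonneg_left h4 hα.le
      have h7 : (α * m) * (-(deriv U z)) ≤ 1 * (-(deriv U z)) :=
        mul_le_mul_of_nonneg_right hαm (by linarith)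
      nlinarith
    have e2 : α * (b * (1 - U z)) ≤ U z * (1 - U z) := by
      have hw : (0:ℝ) ≤ 1 - U z := by linarith
      have t1 : (α * b) * (1 - U z) ≤ (1/2) * (1 - U z) := mul_le_mul_of_nonneg_right hαb hw
      have t2 : (1/2:ℝ) * (1 - U z) ≤ U z * (1 - U z) := mul_le_mul_of_nonneg_right hUh hw
      nlinarith
    nlinarith [e1, e2]
  -- h is continuous
  have hhcont : Continuous h := by
    rw [hhdef]
    exact ((hVm.continuous_deriv le_rfl).neg).add
      (continuous_const.mul (continuous_const.sub hUcont))
  -- Gronwall: φ = h * exp(-α z) is monotone on Iic z1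
  set φ : ℝ → ℝ := fun z => h z * Real.exp (-α * z) with hφdef
  have hφderiv : ∀ z : ℝ, z < 0 →
      HasDerivAt φ ((-(deriv U z) + U z * (1 - U z)) * Real.exp (-α * z)
        + h z * (Real.exp (-α * z) * (-α))) z := by
    intro z hz
    have he : HasDerivAt (fun z => Real.exp (-α * z)) (Real.exp (-α * z) * (-α)) z := by
      have : HasDerivAt (fun z : ℝ => -α * z) (-α) z := by
        simpa using (hasDerivAt_id z).const_mul (-α)
      simpa using this.exp
    exact (hhderiv z hz).mul he
  have hφmono : MonotoneOn φ (Iic z1) := by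
    apply monotoneOn_of_deriv_nonneg (convex_Iic z1)
    · exact (hhcont.mul (Real.continuous_exp.comp (continuous_const.mul continuous_id))).continuousOn
    · rw [interior_Iic]
      intro x hx
      exact ((hφderiv x (lt_trans hx hz1neg)).differentiableAt).differentiableWithinAt
    · rw [interior_Iic]
      intro x hx
      rw [(hφderiv x (lt_trans hx hz1neg)).deriv]
      have hk := hkey x (le_of_lt hx)
      have hexp : 0 < Real.exp (-α * x) := Real.exp_pos _
      nlinarith
  set K : ℝ := h z1 * Real.exp (-α * z1) with hKdef
  have hKnonneg : 0 ≤ K := by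
    have hz0 : z1 < 0 := hz1neg
    have h1 : deriv V z1 < 0 := by
      rw [hderivV z1 hz0]
      have hp : 0 < U z1 ^ (m - 1) := Real.rpow_pos_of_pos (hU01 z1 hz0).1 _
      exact mul_neg_of_neg_of_pos (mul_neg_of_neg_of_pos (hU' z1 hz0) hm0) hp
    have h2 : 0 ≤ 1 - U z1 := le_of_lt (by linarith [(hU01 z1 hz0).2])
    have : 0 ≤ h z1 := by rw [hhdef]; simp only; nlinarith
    positivity
  have hbound : ∀ z : ℝ, z ≤ z1 → h z ≤ K * Real.exp (α * z) := by
    intro z hz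
    have := hφmono (mem_Iic.mpr hz) (mem_Iic.mpr le_rfl) hz
    rw [hφdef] at this
    simp only at this
    have hexp : 0 < Real.exp (-α * z) := Real.exp_pos _
    have hee : Real.exp (-α * z) * Real.exp (α * z) = 1 := by
      rw [← Real.exp_add]; ring_nf; exact Real.exp_zero
    calc h z = h z * Real.exp (-α * z) * Real.exp (α * z) := by
          rw [mul_assoc, hee, mul_one]
      _ ≤ K * Real.exp (α * z) := by
          apply mul_le_mul_of_nonneg_right _ (le_of_lt (Real.exp_pos _))
          exact this
  -- bound |z U'| on (-∞, z1]
  have hhalfpow : (0:ℝ) < (1/2:ℝ) ^ (m - 1) := Real.rpow_pos_of_pos (by norm_num) _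
  set B : ℝ := K / (α * m * (1/2:ℝ) ^ (m - 1)) with hBdef
  have hBnonneg : 0 ≤ B := by positivity
  have hfar : ∀ z : ℝ, z ≤ z1 → |z * deriv U z| ≤ (2 * B) * U z := by
    intro z hz
    have hz0 : z < 0 := lt_of_le_of_lt hz hz1neg
    have hUpos : 0 < U z := (hU01 z hz0).1
    have hU'neg : deriv U z < 0 := hU' z hz0
    have hUh : 1/2 ≤ U z := hUhalf z hz
    have habs : |z * deriv U z| = (-z) * (-(deriv U z)) := by
      have hz0' : 0 ≤ z * deriv U z := by nlinarith
      rw [abs_of_nonneg hz0']; ring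
    -- -(deriv V z) ≤ h z ≤ K exp(α z)
    have h1 : m * ((1/2:ℝ) ^ (m - 1)) * (-(deriv U z)) ≤ K * Real.exp (α * z) := by
      have hpw : (1/2:ℝ) ^ (m - 1) ≤ U z ^ (m - 1) :=
        Real.rpow_le_rpow (by norm_num) hUh hm1
      have h2 : -(deriv V z) ≤ h z := by
        rw [hhdef]; simp only
        nlinarith [(hU01 z hz0).2]
      have h3 : m * ((1/2:ℝ) ^ (m - 1)) * (-(deriv U z)) ≤ -(deriv V z) := by
        rw [hderivV z hz0]
        have := mul_le_mul_of_nonneg_left hpw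
          (by nlinarith : (0:ℝ) ≤ m * (-(deriv U z)))
        nlinarith
      linarith [hbound z hz]
    -- (-z) * exp(α z) ≤ 1/α
    have h4 : (-z) * Real.exp (α * z) ≤ 1 / α := by
      have h5 : α * (-z) ≤ Real.exp (α * (-z)) := by
        nlinarith [Real.add_one_le_exp (α * (-z)), Real.exp_pos (α * (-z))]
      have h6 : Real.exp (α * (-z)) * Real.exp (α * z) = 1 := by
        rw [← Real.exp_add]; ring_nf; exact Real.exp_zero
      have hexp : 0 < Real.exp (α * z) := Real.exp_pos _
      rw [le_div_iff₀ hα]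
      nlinarith [mul_le_mul_of_nonneg_right h5 hexp.le, h6]
    rw [habs]
    -- (-z)*(-U') ≤ (-z) * K e^{αz} / (m (1/2)^{m-1}) ≤ B ≤ 2B * U z
    have h7 : (-z) * (-(deriv U z)) ≤ B := by
      have hz' : 0 < -z := by linarith
      have h8 : (-z) * (m * ((1/2:ℝ) ^ (m - 1)) * (-(deriv U z)))
          ≤ (-z) * (K * Real.exp (α * z)) := by
        apply mul_le_mul_of_nonneg_left h1 (le_of_lt hz')
      have h9 : (-z) * (K * Real.exp (α * z)) ≤ K / α := by
        have := mul_le_mul_of_nonneg_left h4 hKnonneg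
        calc (-z) * (K * Real.exp (α * z)) = K * ((-z) * Real.exp (α * z)) := by ring
          _ ≤ K * (1/α) := this
          _ = K / α := by ring
      rw [hBdef, le_div_iff₀ (by positivity : (0:ℝ) < α * m * (1/2:ℝ) ^ (m - 1))]
      calc (-z) * (-(deriv U z)) * (α * m * (1/2:ℝ) ^ (m - 1))
          = α * ((-z) * (m * ((1/2:ℝ) ^ (m - 1)) * (-(deriv U z)))) := by ring
        _ ≤ α * (K / α) := by
            apply mul_le_mul_of_nonneg_left _ (le_of_lt hα)
            linarith
        _ = K := by field_simp
    nlinarith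
  -- bound on the compact set [z1, -1]
  have hsub : Icc z1 (-1:ℝ) ⊆ Iio 0 := fun x hx => lt_of_le_of_lt hx.2 (by norm_num)
  have hgcont : ContinuousOn (fun z => |z * deriv U z|) (Icc z1 (-1:ℝ)) := by
    apply ContinuousOn.abs
    exact continuousOn_id.mul
      ((hUC2.continuousOn_deriv_of_isOpen isOpen_Iio (by norm_num)).mono hsub)
  have hne : (Icc z1 (-1:ℝ)).Nonempty := ⟨-1, ⟨by linarith, le_rfl⟩⟩
  obtain ⟨x0, hx0mem, hx0max⟩ := isCompact_Icc.exists_isMaxOn hne hgcont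
  obtain ⟨y0, hy0mem, hy0min⟩ := isCompact_Icc.exists_isMinOn hne hUcont.continuousOn
  have hUy0 : 0 < U y0 := (hU01 y0 (hsub hy0mem)).1
  set M : ℝ := |x0 * deriv U x0| with hMdef
  have hMnonneg : 0 ≤ M := abs_nonneg _
  set C2 : ℝ := M / U y0 with hC2def
  have hC2nonneg : 0 ≤ C2 := by positivity
  have hnear : ∀ z : ℝ, z ∈ Icc z1 (-1:ℝ) → |z * deriv U z| ≤ C2 * U z := by
    intro z hzmem
    have hUz : 0 < U z := (hU01 z (hsub hzmem)).1
    have h1 : |z * deriv U z| ≤ M := hx0max hzmem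
    have h2 : U y0 ≤ U z := hy0min hzmem
    calc |z * deriv U z| ≤ M := h1
      _ = C2 * U y0 := by rw [hC2def]; field_simp
      _ ≤ C2 * U z := mul_le_mul_of_nonneg_left h2 hC2nonneg
  -- combine
  refine ⟨max (2*B) C2 + 1, by positivity, fun z hz => ?_⟩
  have hz0 : z < 0 := lt_of_le_of_lt hz (by norm_num)
  have hUz : 0 < U z := (hU01 z hz0).1
  rcases le_or_gt z z1 with hcase | hcase
  · calc |z * deriv U z| ≤ (2*B) * U z := hfar z hcase
      _ ≤ (max (2*B) C2 + 1) * U z := by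
          apply mul_le_mul_of_nonneg_right _ (le_of_lt hUz)
          have := le_max_left (2*B) C2
          linarith
  · calc |z * deriv U z| ≤ C2 * U z := hnear z ⟨le_of_lt hcase, hz⟩
      _ ≤ (max (2*B) C2 + 1) * U z := by
          apply mul_le_mul_of_nonneg_right _ (le_of_lt hUz)
          have := le_max_right (2*B) C2
          linarith
end

section
/- Let m > 1 be a real number, c* > 0, and U : ℝ → ℝ be continuous with U(z) = 0 for z ≥ 0, 0 < U(z) < 1 for z < 0, lim_{z → -∞} U(z) = 1, U twice continuously differentiable on (-∞, 0), z ↦ U(z)^m continuously differentiable on ℝ with (U^m)'(0) = 0 and twice differentiable on (-∞, 0), (U^m)''(z) + c* U'(z) + U(z)(1 - U(z)) = 0 for all z < 0, and U'(z) < 0 for all z < 0. Consider the left difference quotient U(z)/z as z → 0⁻. Then: if 1 < m < 2, lim_{z → 0⁻} U(z)/z = 0; if m = 2, the limit lim_{z → 0⁻} U(z)/z exists and belongs to (-∞, 0); and if m > 2, lim_{z → 0⁻} U(z)/z = -∞. -/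
open Filter Set

theorem tw_aux (m cstar : ℝ) (U : ℝ → ℝ)
    (hm : 1 < m) (hc : 0 < cstar)
    (hUcont : Continuous U)
    (hU0 : ∀ z : ℝ, 0 ≤ z → U z = 0)
    (hU01 : ∀ z : ℝ, z < 0 → 0 < U z ∧ U z < 1)
    (hUC2 : ContDiffOn ℝ 2 U (Set.Iio 0))
    (hVm : ContDiff ℝ 1 (fun z => U z ^ m))
    (hVm0 : deriv (fun z => U z ^ m) 0 = 0)
    (hVm2 : ∀ z : ℝ, z < 0 → DifferentiableAt ℝ (deriv (fun z => U z ^ m)) z)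
    (hODE : ∀ z : ℝ, z < 0 →
      deriv (deriv (fun z => U z ^ m)) z + cstar * deriv U z + U z * (1 - U z) = 0)
    (hU' : ∀ z : ℝ, z < 0 → deriv U z < 0) :
    ∀ z : ℝ, z < 0 →
      ((m-1)/m) * ((-z) * (cstar + z/2)) ≤ U z ^ (m-1) ∧
      U z ^ (m-1) ≤ ((m-1)*cstar/m) * (-z) := by
  have hm0 : (0:ℝ) < m := by linarith
  have hm1 : (0:ℝ) < m - 1 := by linarith
  -- U differentiable on Iio 0
  have hUdiff : ∀ z : ℝ, z < 0 → DifferentiableAt ℝ U z := by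
    intro z hz
    exact (hUC2.differentiableOn (by norm_num)).differentiableAt (Iio_mem_nhds hz)
  -- U antitone on Iic 0
  have hUanti : AntitoneOn U (Iic 0) := by
    apply antitoneOn_of_deriv_nonpos (convex_Iic 0) hUcont.continuousOn
    · rw [interior_Iic]
      exact fun z hz => (hUdiff z hz).differentiableWithinAt
    · rw [interior_Iic]
      exact fun z hz => (hU' z hz).le
  have hUnonneg : ∀ z : ℝ, 0 ≤ U z := by
    intro z
    rcases lt_or_ge z 0 with h | h
    · exact (hU01 z h).1.le
    · rw [hU0 z h]
  -- derivative of V on Iio 0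
  have hVder : ∀ z : ℝ, z < 0 →
      HasDerivAt (fun z => U z ^ m) (m * U z ^ (m-1) * deriv U z) z := by
    intro z hz
    have h := (hUdiff z hz).hasDerivAt.rpow_const (p := m) (Or.inl (ne_of_gt (hU01 z hz).1))
    convert h using 1
    ring
  have hderivV : ∀ z : ℝ, z < 0 →
      deriv (fun z => U z ^ m) z = m * U z ^ (m-1) * deriv U z := by
    intro z hz; exact (hVder z hz).deriv
  -- F = V' + c U
  set F : ℝ → ℝ := fun t => deriv (fun z => U z ^ m) t + cstar * U t with hFdef
  have hFcont : Continuous F := (hVm.continuous_deriv le_rfl).add (continuous_const.mul hUcont)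
  have hF0 : F 0 = 0 := by simp [hFdef, hVm0, hU0 0 le_rfl]
  have hFderiv : ∀ t : ℝ, t < 0 → HasDerivAt F (-(U t * (1 - U t))) t := by
    intro t ht
    have h1 := (hVm2 t ht).hasDerivAt
    have h2 := (hUdiff t ht).hasDerivAt.const_mul cstar
    have h3 := h1.add h2
    have := hODE t ht
    exact h3.congr_deriv (by linarith)
  have hFdiff : ∀ t : ℝ, t < 0 → DifferentiableAt ℝ F t :=
    fun t ht => (hFderiv t ht).differentiableAt
  -- F ≥ 0 on Iio 0
  have hFanti : AntitoneOn F (Iic 0) := by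
    apply antitoneOn_of_deriv_nonpos (convex_Iic 0) hFcont.continuousOn
    · rw [interior_Iic]
      exact fun t ht => (hFdiff t ht).differentiableWithinAt
    · rw [interior_Iic]
      intro t ht
      rw [(hFderiv t ht).deriv]
      have h1 := (hU01 t ht).1
      have h2 := (hU01 t ht).2
      nlinarith
  have hFnonneg : ∀ z : ℝ, z < 0 → 0 ≤ F z := by
    intro z hz
    have := hFanti (mem_Iic.mpr hz.le) (mem_Iic.mpr le_rfl) hz.le
    rw [hF0] at this; exact this
  -- F z ≤ (-z) * U z
  have hFupper : ∀ z : ℝ, z < 0 → F z ≤ (-z) * U z := by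
    intro z hz
    have hmono : MonotoneOn (fun t => F t + U z * t) (Icc z 0) := by
      apply monotoneOn_of_deriv_nonneg (convex_Icc z 0)
      · exact (hFcont.add (continuous_const.mul continuous_id)).continuousOn
      · rw [interior_Icc]
        intro t ht
        exact ((hFdiff t ht.2).add ((differentiable_id.const_mul (U z)) t)).differentiableWithinAt
      · rw [interior_Icc]
        intro t ht
        have hd : HasDerivAt (fun t => F t + U z * t) (-(U t * (1 - U t)) + U z * 1) t :=
          (hFderiv t ht.2).add ((hasDerivAt_id t).const_mul (U z))
        rw [hd.deriv]
        have hUle : U t ≤ U z := hUanti (mem_Iic.mpr hz.le) (mem_Iic.mpr ht.2.le) ht.1.le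
        have h1 := (hU01 t ht.2).1
        have h2 := (hU01 t ht.2).2
        nlinarith
    have := hmono (mem_Icc.mpr ⟨le_rfl, hz.le⟩) (mem_Icc.mpr ⟨hz.le, le_rfl⟩) hz.le
    simp only [hF0, mul_zero, zero_add] at this
    linarith
  -- G = U ^ (m-1)
  set G : ℝ → ℝ := fun t => U t ^ (m-1) with hGdef
  have hGcont : Continuous G := by
    rw [continuous_iff_continuousAt]
    intro t
    exact (Real.continuousAt_rpow_const (U t) (m-1) (Or.inr hm1.le)).comp hUcont.continuousAt
  have hG0 : G 0 = 0 := by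
    simp only [hGdef, hU0 0 le_rfl]
    exact Real.zero_rpow (ne_of_gt hm1)
  have hGder : ∀ t : ℝ, t < 0 →
      HasDerivAt G ((m-1) * U t ^ (m-2) * deriv U t) t := by
    intro t ht
    have h := (hUdiff t ht).hasDerivAt.rpow_const (p := m-1) (Or.inl (ne_of_gt (hU01 t ht).1))
    convert h using 1
    rw [show m - 1 - 1 = m - 2 by ring]
    ring
  -- bounds on deriv G
  have hGderbound : ∀ t : ℝ, t < 0 →
      -((m-1)*cstar/m) ≤ (m-1) * U t ^ (m-2) * deriv U t ∧
      (m-1) * U t ^ (m-2) * deriv U t ≤ ((m-1)/m) * (-t - cstar) := by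
    intro t ht
    have hu : 0 < U t := (hU01 t ht).1
    have hum2 : (0:ℝ) < U t ^ (m-2) := Real.rpow_pos_of_pos hu _
    have hum1 : U t ^ (m-1) = U t ^ (m-2) * U t := by
      rw [show m - 1 = (m-2) + 1 by ring, Real.rpow_add hu, Real.rpow_one]
    have hFz := hFnonneg t ht
    have hFz2 := hFupper t ht
    rw [hFdef] at hFz hFz2
    simp only at hFz hFz2
    rw [hderivV t ht, hum1] at hFz hFz2
    -- hFz : 0 ≤ m * (U t ^ (m-2) * U t) * deriv U t + cstar * U t
    -- hFz2 : m * (U t ^ (m-2) * U t) * deriv U t + cstar * U t ≤ (-t) * U t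
    set A := U t ^ (m-2) * deriv U t with hA
    have hfac1 : (0:ℝ) * U t ≤ (m * A + cstar) * U t := by
      rw [hA]; nlinarith [hFz]
    have hfac2 : (m * A + cstar + t) * U t ≤ 0 * U t := by
      rw [hA]; nlinarith [hFz2]
    have hmA1 : -cstar ≤ m * A := by
      have := le_of_mul_le_mul_right hfac1 hu
      linarith
    have hmA2 : m * A ≤ -t - cstar := by
      have := le_of_mul_le_mul_right hfac2 hu
      linarith
    constructor
    · rw [show (m-1) * U t ^ (m-2) * deriv U t = (m-1) * A by rw [hA]; ring,
        show -((m-1)*cstar/m) = (-((m-1)*cstar))/m by ring, div_le_iff₀ hm0]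
      nlinarith [mul_le_mul_of_nonneg_left hmA1 hm1.le]
    · rw [show (m-1) * U t ^ (m-2) * deriv U t = (m-1) * A by rw [hA]; ring,
        show ((m-1)/m) * (-t - cstar) = ((m-1)*(-t-cstar))/m by ring, le_div_iff₀ hm0]
      nlinarith [mul_le_mul_of_nonneg_left hmA2 hm1.le]
  -- monotone comparison functions
  have hHmono : MonotoneOn (fun t => G t + ((m-1)*cstar/m) * t) (Iic 0) := by
    apply monotoneOn_of_deriv_nonneg (convex_Iic 0)
    · exact (hGcont.add (continuous_const.mul continuous_id)).continuousOn
    · rw [interior_Iic]; intro t ht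
      exact ((hGder t ht).differentiableAt.add ((differentiable_id.const_mul
        ((m-1)*cstar/m)) t)).differentiableWithinAt
    · rw [interior_Iic]; intro t ht
      have hd : HasDerivAt (fun t => G t + ((m-1)*cstar/m) * t)
          ((m-1) * U t ^ (m-2) * deriv U t + ((m-1)*cstar/m) * 1) t :=
        (hGder t ht).add ((hasDerivAt_id t).const_mul _)
      rw [hd.deriv]
      have := (hGderbound t ht).1
      linarith
  have hKanti : AntitoneOn (fun t => G t + ((m-1)/m) * (cstar * t + t^2/2)) (Iic 0) := by
    apply antitoneOn_of_deriv_nonpos (convex_Iic 0)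
    · apply Continuous.continuousOn
      exact hGcont.add (continuous_const.mul ((continuous_const.mul continuous_id).add
        ((continuous_pow 2).div_const 2)))
    · rw [interior_Iic]; intro t ht
      apply DifferentiableAt.differentiableWithinAt
      apply (hGder t ht).differentiableAt.add
      apply DifferentiableAt.const_mul
      exact (differentiableAt_id.const_mul cstar).add ((differentiableAt_pow 2).div_const 2)
    · rw [interior_Iic]; intro t ht
      have hq : HasDerivAt (fun t : ℝ => cstar * t + t^2/2)
          (cstar * 1 + (((2:ℕ) : ℝ) * t ^ (2-1) * 1)/2) t :=
        ((hasDerivAt_id t).const_mul cstar).add (((hasDerivAt_id t).pow 2).div_const 2)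
      have hd : HasDerivAt (fun t => G t + ((m-1)/m) * (cstar * t + t^2/2)) _ t :=
        (hGder t ht).add (hq.const_mul ((m-1)/m))
      rw [hd.deriv]
      have hb := (hGderbound t ht).2
      have : cstar * 1 + (((2:ℕ) : ℝ) * t ^ (2-1) * 1)/2 = cstar + t := by
        norm_num
      rw [this]
      have heq : ((m-1)/m) * (-t - cstar) + ((m-1)/m) * (cstar + t) = 0 := by ring
      linarith
  -- conclude
  intro z hz
  have h1 := hHmono (mem_Iic.mpr hz.le) (mem_Iic.mpr le_rfl) hz.le
  have h2 := hKanti (mem_Iic.mpr hz.le) (mem_Iic.mpr le_rfl) hz.le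
  simp only [hG0, mul_zero, add_zero, zero_add, mul_one] at h1 h2
  constructor
  · have : ((m-1)/m) * ((-z) * (cstar + z/2)) = -(((m-1)/m) * (cstar * z + z^2/2)) := by ring
    rw [this]
    nlinarith [h2]
  · linarith

/-- Trichotomy for the one-sided derivative of the sharp minimal
travelling wave at 0, i.e. for `lim_{z → 0⁻} U(z)/z`: it is `0` if `1 < m < 2`,
a finite negative number if `m = 2`, and `-∞` if `m > 2`. -/
theorem travelling_wave_left_derivative_trichotomy
    (m cstar : ℝ) (U : ℝ → ℝ)
    (hm : 1 < m) (hc : 0 < cstar)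
    (hUcont : Continuous U)
    (hU0 : ∀ z : ℝ, 0 ≤ z → U z = 0)
    (hU01 : ∀ z : ℝ, z < 0 → 0 < U z ∧ U z < 1)
    (hUlim : Tendsto U atBot (nhds 1))
    (hUC2 : ContDiffOn ℝ 2 U (Set.Iio 0))
    (hVm : ContDiff ℝ 1 (fun z => U z ^ m))
    (hVm0 : deriv (fun z => U z ^ m) 0 = 0)
    (hVm2 : ∀ z : ℝ, z < 0 → DifferentiableAt ℝ (deriv (fun z => U z ^ m)) z)
    (hODE : ∀ z : ℝ, z < 0 →
      deriv (deriv (fun z => U z ^ m)) z + cstar * deriv U z + U z * (1 - U z) = 0)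
    (hU' : ∀ z : ℝ, z < 0 → deriv U z < 0) :
    ((1 < m ∧ m < 2) →
      Tendsto (fun z : ℝ => U z / z) (nhdsWithin 0 (Set.Iio 0)) (nhds 0)) ∧
    (m = 2 →
      ∃ l : ℝ, l < 0 ∧
        Tendsto (fun z : ℝ => U z / z) (nhdsWithin 0 (Set.Iio 0)) (nhds l)) ∧
    (2 < m →
      Tendsto (fun z : ℝ => U z / z) (nhdsWithin 0 (Set.Iio 0)) atBot) := by
  have hm1 : (0:ℝ) < m - 1 := by linarith
  have hkey := tw_aux m cstar U hm hc hUcont hU0 hU01 hUC2 hVm hVm0 hVm2 hODE hU'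
  refine ⟨?_, ?_, ?_⟩
  · -- case 1 < m < 2
    rintro ⟨-, hm2⟩
    set q : ℝ := (m-1)⁻¹ with hqdef
    have hq1 : 1 < q := (one_lt_inv₀ hm1).mpr (by linarith)
    have hUeq : ∀ z : ℝ, z < 0 → U z = (U z ^ (m-1)) ^ q := by
      intro z hz
      rw [← Real.rpow_mul (hU01 z hz).1.le, mul_inv_cancel₀ (ne_of_gt hm1), Real.rpow_one]
    -- lower bound function
    have hlow : ∀ z : ℝ, z < 0 →
        (((m-1)*cstar/m) * (-z)) ^ q / z ≤ U z / z := by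
      intro z hz
      have hb := (hkey z hz).2
      have hU := hUeq z hz
      have h1 : U z ≤ (((m-1)*cstar/m) * (-z)) ^ q := by
        rw [hU]
        exact Real.rpow_le_rpow (Real.rpow_nonneg ((hU01 z hz).1.le) _) hb (by linarith)
      exact div_le_div_of_nonpos_of_le hz.le h1
    have hup : ∀ z : ℝ, z < 0 → U z / z ≤ 0 :=
      fun z hz => (div_neg_of_pos_of_neg (hU01 z hz).1 hz).le
    -- the lower bound tends to 0
    have hL : Tendsto (fun z : ℝ => (((m-1)*cstar/m) * (-z)) ^ q / z)
        (nhdsWithin 0 (Set.Iio 0)) (nhds 0) := by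
      have hκ : 0 ≤ (m-1)*cstar/m := by positivity
      have heq : ∀ z : ℝ, z < 0 →
          (((m-1)*cstar/m) * (-z)) ^ q / z
            = -(((m-1)*cstar/m) ^ q * (-z) ^ (q-1)) := by
        intro z hz
        have hz' : (0:ℝ) < -z := by linarith
        have e1 : (-z) ^ q = (-z) ^ (q-1) * (-z) := by
          rw [← Real.rpow_add_one (ne_of_gt hz') (q-1)]
          ring_nf
        rw [div_eq_iff (ne_of_lt hz), Real.mul_rpow hκ hz'.le, e1]
        ring
      have ht : Tendsto (fun z : ℝ => -(((m-1)*cstar/m) ^ q * (-z) ^ (q-1)))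
          (nhdsWithin 0 (Set.Iio 0)) (nhds 0) := by
        have c1 : ContinuousAt (fun x : ℝ => x ^ (q-1)) 0 :=
          Real.continuousAt_rpow_const 0 (q-1) (Or.inr (by linarith))
        have c1' : ContinuousAt (fun x : ℝ => x ^ (q-1)) (-(0:ℝ)) := by
          rw [neg_zero]; exact c1
        have c2 : ContinuousAt (fun z : ℝ => (-z) ^ (q-1)) 0 :=
          c1'.comp (continuous_neg.continuousAt)
        have h0 : ((-(0:ℝ)) ^ (q-1)) = 0 := by
          rw [neg_zero, Real.zero_rpow (by linarith : q - 1 ≠ 0)]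
        have hmt : Tendsto (fun z : ℝ => (-z) ^ (q-1)) (nhdsWithin (0:ℝ) (Set.Iio 0))
            (nhds ((-(0:ℝ)) ^ (q-1))) :=
          c2.tendsto.mono_left nhdsWithin_le_nhds
        rw [h0] at hmt
        have := (hmt.const_mul (((m-1)*cstar/m) ^ q)).neg
        rw [mul_zero, neg_zero] at this
        exact this
      apply ht.congr'
      filter_upwards [eventually_mem_nhdsWithin] with z hz
      exact (heq z hz).symm
    apply tendsto_of_tendsto_of_tendsto_of_le_of_le' hL tendsto_const_nhds
    · filter_upwards [eventually_mem_nhdsWithin] with z hz using hlow z hz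
    · filter_upwards [eventually_mem_nhdsWithin] with z hz using hup z hz
  · -- case m = 2
    intro hm2
    subst hm2
    refine ⟨-cstar/2, by linarith, ?_⟩
    have hb : ∀ z : ℝ, z < 0 →
        (1/2) * ((-z) * (cstar + z/2)) ≤ U z ∧ U z ≤ (cstar/2) * (-z) := by
      intro z hz
      have := hkey z hz
      rw [show (2:ℝ) - 1 = 1 by norm_num, Real.rpow_one] at this
      constructor
      · have := this.1; nlinarith
      · have := this.2; nlinarith
    have hlow : ∀ z : ℝ, z < 0 → -cstar/2 ≤ U z / z := by
      intro z hz
      rw [le_div_iff_of_neg hz]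
      have := (hb z hz).2; nlinarith
    have hup : ∀ z : ℝ, z < 0 → U z / z ≤ -(1/2) * (cstar + z/2) := by
      intro z hz
      rw [div_le_iff_of_neg hz]
      have := (hb z hz).1; nlinarith
    have hH : Tendsto (fun z : ℝ => -(1/2) * (cstar + z/2))
        (nhdsWithin 0 (Set.Iio 0)) (nhds (-cstar/2)) := by
      have : Continuous (fun z : ℝ => -(1/2) * (cstar + z/2)) := by continuity
      have ht := (this.tendsto 0).mono_left
        (nhdsWithin_le_nhds : nhdsWithin (0:ℝ) (Set.Iio 0) ≤ nhds 0)
      convert ht using 2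
      ring
    apply tendsto_of_tendsto_of_tendsto_of_le_of_le' tendsto_const_nhds hH
    · filter_upwards [eventually_mem_nhdsWithin] with z hz using hlow z hz
    · filter_upwards [eventually_mem_nhdsWithin] with z hz using hup z hz
  · -- case m > 2
    intro hm2
    set q : ℝ := (m-1)⁻¹ with hqdef
    have hq0 : 0 < q := by positivity
    have hq1 : q < 1 := by
      rw [hqdef]
      rw [inv_lt_one_iff₀]
      right; linarith
    set κ : ℝ := (m-1)*cstar/(2*m) with hκdef
    have hκpos : 0 < κ := by positivity
    have hUeq : ∀ z : ℝ, z < 0 → U z = (U z ^ (m-1)) ^ q := by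
      intro z hz
      rw [← Real.rpow_mul (hU01 z hz).1.le, mul_inv_cancel₀ (ne_of_gt hm1), Real.rpow_one]
    -- eventually, U z / z ≤ -(κ^q * (-z)^(q-1))
    have hev : ∀ᶠ z in nhdsWithin (0:ℝ) (Set.Iio 0),
        U z / z ≤ -(κ ^ q * (-z) ^ (q-1)) := by
      filter_upwards [eventually_mem_nhdsWithin,
        eventually_nhdsWithin_of_eventually_nhds
          (eventually_gt_nhds (by linarith : -cstar < (0:ℝ)))] with z hz hz2
      have hz0 : z < 0 := hz
      have hz' : (0:ℝ) < -z := by linarith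
      have hGlow : κ * (-z) ≤ U z ^ (m-1) := by
        have := (hkey z hz).1
        have h2 : κ * (-z) ≤ ((m-1)/m) * ((-z) * (cstar + z/2)) := by
          rw [hκdef]
          have hmpos : (0:ℝ) < m := by linarith
          have h3 : cstar / 2 ≤ cstar + z / 2 := by linarith
          have h4 : 0 ≤ (m-1)/m * (-z) := by positivity
          calc (m-1)*cstar/(2*m) * (-z) = ((m-1)/m * (-z)) * (cstar/2) := by ring
            _ ≤ ((m-1)/m * (-z)) * (cstar + z/2) := mul_le_mul_of_nonneg_left h3 h4
            _ = (m-1)/m * ((-z) * (cstar + z/2)) := by ring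
        linarith
      have hUlow : (κ * (-z)) ^ q ≤ U z := by
        rw [hUeq z hz]
        exact Real.rpow_le_rpow (by positivity) hGlow hq0.le
      rw [div_le_iff_of_neg hz]
      have heq : -(κ ^ q * (-z) ^ (q-1)) * z = (κ * (-z)) ^ q := by
        have e1 : (-z) ^ q = (-z) ^ (q-1) * (-z) := by
          rw [← Real.rpow_add_one (ne_of_gt hz') (q-1)]
          ring_nf
        rw [Real.mul_rpow hκpos.le hz'.le, e1]
        ring
      rw [heq]
      exact hUlow
    -- the bound tends to -∞
    have hbot : Tendsto (fun z : ℝ => -(κ ^ q * (-z) ^ (q-1)))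
        (nhdsWithin (0:ℝ) (Set.Iio 0)) atBot := by
      have hneg : Tendsto (fun z : ℝ => -z) (nhdsWithin (0:ℝ) (Set.Iio 0))
          (nhdsWithin (0:ℝ) (Set.Ioi 0)) := by
        apply tendsto_nhdsWithin_of_tendsto_nhds_of_eventually_within
        · have := (continuous_neg.tendsto (0:ℝ)).mono_left
            (nhdsWithin_le_nhds : nhdsWithin (0:ℝ) (Set.Iio 0) ≤ nhds 0)
          simpa using this
        · filter_upwards [eventually_mem_nhdsWithin] with z hz
          exact neg_pos.mpr (mem_Iio.mp hz)
      have hinv : Tendsto (fun z : ℝ => (-z)⁻¹) (nhdsWithin (0:ℝ) (Set.Iio 0)) atTop :=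
        tendsto_inv_nhdsGT_zero.comp hneg
      have hpow : Tendsto (fun z : ℝ => ((-z)⁻¹) ^ (1-q))
          (nhdsWithin (0:ℝ) (Set.Iio 0)) atTop :=
        (tendsto_rpow_atTop (by linarith : (0:ℝ) < 1 - q)).comp hinv
      have hpow' : Tendsto (fun z : ℝ => (-z) ^ (q-1))
          (nhdsWithin (0:ℝ) (Set.Iio 0)) atTop := by
        apply hpow.congr'
        filter_upwards [eventually_mem_nhdsWithin] with z hz
        have hz' : (0:ℝ) ≤ -z := by simp at hz; linarith
        rw [Real.inv_rpow hz', ← Real.rpow_neg hz']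
        ring_nf
      have := (hpow'.const_mul_atTop (by positivity : (0:ℝ) < κ ^ q))
      exact tendsto_neg_atTop_atBot.comp this
    exact tendsto_atBot_mono' _ hev hbot
end
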